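/- arXiv:1910.12536 — 6 statements merged into one kernel-verified Lean document; each statement's English description precedes it below -/
import Mathlib

section
/- Let η ∈ ℝ and let G be a digraph (with connected underlying graph) equipped with the η-function θ. Then the normalized η-Hermitian adjacency matrix of G equals the discriminant of the associated quantum walk: H̃_η(G) = K S_θ K*, where K = K(G^±) and S_θ = S_θ(G^±). -/
open Matrix Polynomial

noncomputable section

variable {V : Type} [Fintype V] [DecidableEq V]

/-- The set of symmetric arcs of a simple graph `G`: ordered pairs of adjacent vertices. -/
abbrev GArc (G : SimpleGraph V) : Type := {p : V × V // G.Adj p.1 p.2}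

/-- The origin of an arc. -/
def arcO {G : SimpleGraph V} (a : GArc G) : V := a.1.1

/-- The terminus of an arc. -/
def arcT {G : SimpleGraph V} (a : GArc G) : V := a.1.2

/-- The inverse of an arc. -/
def arcInv {G : SimpleGraph V} (a : GArc G) : GArc G := ⟨(a.1.2, a.1.1), a.2.symm⟩

/-- The boundary matrix `K`, with `K_{v,a} = δ_{v,t(a)} / √(deg t(a))`. -/
def bdK (G : SimpleGraph V) [DecidableRel G.Adj] : Matrix V (GArc G) ℂ :=
  fun v a => if v = arcT a then ((1 / Real.sqrt (G.degree (arcT a)) : ℝ) : ℂ) else 0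

/-- The coin operator `C = 2K*K - I`. -/
def coinC (G : SimpleGraph V) [DecidableRel G.Adj] : Matrix (GArc G) (GArc G) ℂ :=
  (2 : ℂ) • ((bdK G)ᴴ * bdK G) - 1

/-- The shift operator `S`, with `S_{ab} = δ_{a,b⁻¹}`. -/
def shiftS (G : SimpleGraph V) : Matrix (GArc G) (GArc G) ℂ :=
  fun a b => if a = arcInv b then 1 else 0

/-- The perturbed shift `S_θ`, with `(S_θ)_{ab} = e^{iθ(b)} δ_{a,b⁻¹}`. -/
def shiftStheta (G : SimpleGraph V) (θ : GArc G → ℝ) : Matrix (GArc G) (GArc G) ℂ :=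
  fun a b => if a = arcInv b then Complex.exp ((θ b : ℂ) * Complex.I) else 0

/-- The Grover transfer matrix `U = SC`. -/
def groverU (G : SimpleGraph V) [DecidableRel G.Adj] : Matrix (GArc G) (GArc G) ℂ :=
  shiftS G * coinC G

/-- The transfer matrix `U_θ = S_θ C`. -/
def transferU (G : SimpleGraph V) [DecidableRel G.Adj] (θ : GArc G → ℝ) :
    Matrix (GArc G) (GArc G) ℂ :=
  shiftStheta G θ * coinC G

/-- The diagonal matrix `D_θ` with `(D_θ)_{ab} = e^{iθ(a)} δ_{ab}`. -/
def Dtheta (G : SimpleGraph V) (θ : GArc G → ℝ) : Matrix (GArc G) (GArc G) ℂ :=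
  Matrix.diagonal fun a => Complex.exp ((θ a : ℂ) * Complex.I)

/-- The positive support of a (real-valued) complex matrix. -/
def suppPos {α : Type} (M : Matrix α α ℂ) : Matrix α α ℂ :=
  fun a b => if 0 < (M a b).re then 1 else 0

/-- The negative support of a (real-valued) complex matrix. -/
def suppNeg {α : Type} (M : Matrix α α ℂ) : Matrix α α ℂ :=
  fun a b => if (M a b).re < 0 then 1 else 0

/-- The positive support of a real matrix. -/
def suppPosR {α : Type} (M : Matrix α α ℝ) : Matrix α α ℝ :=
  fun a b => if 0 < M a b then 1 else 0

/-- The negative support of a real matrix. -/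
def suppNegR {α : Type} (M : Matrix α α ℝ) : Matrix α α ℝ :=
  fun a b => if M a b < 0 then 1 else 0

/-- A digraph on `V`: an irreflexive (Boolean) arc relation. -/
structure Dgraph (V : Type) where
  adj : V → V → Bool
  loopless : ∀ v, adj v v = false

namespace Dgraph

/-- `(x,y)` is an arc of `D`. -/
def Adj (D : Dgraph V) (x y : V) : Prop := D.adj x y = true

instance (D : Dgraph V) : DecidableRel D.Adj := fun _ _ => by unfold Adj; infer_instance

/-- The underlying (undirected simple) graph `G^±`. -/
def underlying (D : Dgraph V) : SimpleGraph V where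
  Adj x y := D.Adj x y ∨ D.Adj y x
  symm := ⟨fun _ _ h => h.symm⟩
  loopless := ⟨fun v h => by
    rcases h with h | h <;> exact absurd h (by simp [Adj, D.loopless v])⟩

instance (D : Dgraph V) : DecidableRel D.underlying.Adj :=
  fun x y => inferInstanceAs (Decidable (D.Adj x y ∨ D.Adj y x))

/-- The transpose digraph `G⁻¹`. -/
def transpose (D : Dgraph V) : Dgraph V where
  adj x y := D.adj y x
  loopless := D.loopless

end Dgraph

/-- The `η`-function of a digraph `D`: `η` on `A∖A⁻¹`, `-η` on `A⁻¹∖A`, `0` on digons. -/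
def etaFun (D : Dgraph V) (η : ℝ) (a : GArc D.underlying) : ℝ :=
  if D.Adj (arcO a) (arcT a) then (if D.Adj (arcT a) (arcO a) then 0 else η) else -η

/-- The `η`-Hermitian adjacency matrix `H_η`. -/
def Heta (D : Dgraph V) (η : ℝ) : Matrix V V ℂ :=
  fun x y =>
    if D.Adj x y then (if D.Adj y x then 1 else Complex.exp ((η : ℂ) * Complex.I))
    else if D.Adj y x then Complex.exp (-(η : ℂ) * Complex.I) else 0

/-- The diagonal matrix `D^{-1/2}` of inverse square roots of degrees. -/
def degHalfInv (D : Dgraph V) : Matrix V V ℂ :=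
  Matrix.diagonal fun x => ((1 / Real.sqrt (D.underlying.degree x) : ℝ) : ℂ)

/-- The normalized `η`-Hermitian adjacency matrix `H̃_η = D^{-1/2} H_η D^{-1/2}`. -/
def normHeta (D : Dgraph V) (η : ℝ) : Matrix V V ℂ :=
  degHalfInv D * Heta D η * degHalfInv D

/-- The multiset of preimages of `μ` under `φ(z) = (z + z⁻¹)/2` on the unit circle:
the distinct roots of `z² - 2μz + 1`. -/
def phiInv (μ : ℂ) : Multiset ℂ :=
  ((X ^ 2 - Polynomial.C (2 * μ) * X + 1 : Polynomial ℂ).roots).dedup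

/-- A closed path in a graph: a nonempty chain of arcs returning to its start. -/
structure ClosedPath (G : SimpleGraph V) where
  arcs : List (GArc G)
  ne : arcs ≠ []
  chain : arcs.Chain' fun a b => arcT a = arcO b
  closed : arcT (arcs.getLast ne) = arcO (arcs.head ne)

/-- `ℐ(c) = Σ_j θ(a_j)` for a closed path `c`. -/
def pathSum {G : SimpleGraph V} (θ : GArc G → ℝ) (c : ClosedPath G) : ℝ :=
  (c.arcs.map θ).sum

/-- `x ∈ 2πℤ`. -/
def in2piZ (x : ℝ) : Prop := ∃ m : ℤ, x = 2 * Real.pi * m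

/-- `x ∈ 2π(ℤ + 1/2)`. -/
def in2piZhalf (x : ℝ) : Prop := ∃ m : ℤ, x = 2 * Real.pi * (m + 1 / 2)

/-- The matrix `F_t` with `(F_t)_{x,a} = δ_{x,t(a)}`. -/
def Ft (G : SimpleGraph V) : Matrix V (GArc G) ℂ := fun x a => if x = arcT a then 1 else 0

/-- The matrix `F_o` with `(F_o)_{x,a} = δ_{x,o(a)}`. -/
def Fo (G : SimpleGraph V) : Matrix V (GArc G) ℂ := fun x a => if x = arcO a then 1 else 0

/-- The 0/1 matrix `R` with `R_{ab} = 1` iff `m(a,b) = (t(b),o(a)) ∈ A(G) ∩ A(G)⁻¹`. -/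
def Rmat (D : Dgraph V) : Matrix (GArc D.underlying) (GArc D.underlying) ℂ :=
  fun a b => if D.Adj (arcT b) (arcO a) ∧ D.Adj (arcO a) (arcT b) then 1 else 0

/-- `U_θ^{(n,+)}`: the 0/1 matrix with `(a,b)` entry `1` iff `Re(D_θ U_θⁿ)_{ab} > 0`. -/
def suppPow (D : Dgraph V) (η : ℝ) (n : ℕ) :
    Matrix (GArc D.underlying) (GArc D.underlying) ℂ :=
  suppPos (Dtheta D.underlying (etaFun D η) * transferU D.underlying (etaFun D η) ^ n)

/-- `U_θ^{(n,−)}`: the 0/1 matrix with `(a,b)` entry `1` iff `Re(D_θ U_θⁿ)_{ab} < 0`. -/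
def suppPowNeg (D : Dgraph V) (η : ℝ) (n : ℕ) :
    Matrix (GArc D.underlying) (GArc D.underlying) ℂ :=
  suppNeg (Dtheta D.underlying (etaFun D η) * transferU D.underlying (etaFun D η) ^ n)

/-- The number of digons of a digraph. -/
def digonCount (D : Dgraph V) : ℕ :=
  (Finset.univ.filter fun p : V × V => D.Adj p.1 p.2 ∧ D.Adj p.2 p.1).card / 2

/-- The digraph `Y_{a,n-a}`: two complete (digon) blocks `[a]` and `[n]∖[a]`, with all
arcs from the first block to the second. -/
def Ydigraph (n a : ℕ) : Dgraph (Fin n) where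
  adj x y := decide ((x ≠ y) ∧
    ((x.val < a ∧ y.val < a) ∨ (a ≤ x.val ∧ a ≤ y.val) ∨ (x.val < a ∧ a ≤ y.val)))
  loopless := fun v => by simp

/-- The shift operator as a real matrix. -/
def shiftSR (G : SimpleGraph V) : Matrix (GArc G) (GArc G) ℝ :=
  fun a b => if a = arcInv b then 1 else 0

/-- The Grover transfer matrix as a real matrix, given by its entries
`U_{ab} = (2/deg t(b)) δ_{t(b),o(a)} − δ_{a⁻¹,b}`. -/
def groverEnt (G : SimpleGraph V) [DecidableRel G.Adj] : Matrix (GArc G) (GArc G) ℝ :=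
  fun a b => 2 / (G.degree (arcT b)) * (if arcT b = arcO a then 1 else 0)
    - (if arcInv a = b then 1 else 0)

/-- The normalized `η`-Hermitian adjacency matrix equals the discriminant `K S_θ K*`. -/
theorem stmt1 {V : Type} [Fintype V] [DecidableEq V] (η : ℝ) (D : Dgraph V)
    (hconn : D.underlying.Connected) :
    normHeta D η =
      bdK D.underlying * shiftStheta D.underlying (etaFun D η) * (bdK D.underlying)ᴴ := by
  classical
  set G := D.underlying
  ext x y
  show normHeta D η x y = (bdK G * shiftStheta G (etaFun D η) * (bdK G)ᴴ) x y
  have key : ∀ b : GArc G,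
      (bdK G * shiftStheta G (etaFun D η)) x b
        = (if x = arcO b then ((1 / Real.sqrt (G.degree x) : ℝ) : ℂ) else 0)
          * Complex.exp ((etaFun D η b : ℂ) * Complex.I) := by
    intro b
    rw [Matrix.mul_apply, Finset.sum_eq_single (arcInv b)]
    · have hT : arcT (arcInv b) = arcO b := rfl
      simp only [bdK, shiftStheta, hT, if_pos rfl]
      by_cases hx : x = arcO b
      · subst hx; simp; rw [hT]
      · simp [hx]
    · intro c _ hc
      simp [shiftStheta, hc]
    · intro h; exact absurd (Finset.mem_univ _) h
  rw [Matrix.mul_apply]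
  simp only [key, Matrix.conjTranspose_apply, bdK]
  have hterm : ∀ b : GArc G,
      (if x = arcO b then ((1 / Real.sqrt (G.degree x) : ℝ) : ℂ) else 0)
          * Complex.exp ((etaFun D η b : ℂ) * Complex.I)
          * star (if y = arcT b then ((1 / Real.sqrt (G.degree (arcT b)) : ℝ) : ℂ) else 0)
        = if x = arcO b ∧ y = arcT b then
            ((1 / Real.sqrt (G.degree x) : ℝ) : ℂ)
              * Complex.exp ((etaFun D η b : ℂ) * Complex.I)
              * ((1 / Real.sqrt (G.degree y) : ℝ) : ℂ)
          else 0 := by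
    intro b
    by_cases hx : x = arcO b
    · by_cases hy : y = arcT b
      · subst hy
        simp [hx, Complex.star_def]
      · simp [hx, hy]
    · simp [hx]
  simp only [hterm]
  have hL : normHeta D η x y
      = ((1 / Real.sqrt (G.degree x) : ℝ) : ℂ) * Heta D η x y
          * ((1 / Real.sqrt (G.degree y) : ℝ) : ℂ) := by
    simp [normHeta, degHalfInv, Matrix.diagonal_mul, Matrix.mul_diagonal, mul_comm,
      mul_assoc, mul_left_comm, G]
  rw [hL]
  by_cases hadj : G.Adj x y
  · rw [Finset.sum_eq_single (⟨(x, y), hadj⟩ : GArc G)]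
    · have hc : x = arcO (⟨(x, y), hadj⟩ : GArc G) ∧ y = arcT (⟨(x, y), hadj⟩ : GArc G) :=
        ⟨rfl, rfl⟩
      rw [if_pos hc]
      congr 1
      congr 1
      -- Heta x y = exp (etaFun ...)
      simp only [Heta, etaFun, arcO, arcT]
      rcases hadj with h1 | h2
      · by_cases h2 : D.Adj y x
        · simp [h1, h2]
        · simp [h1, h2]
      · by_cases h1 : D.Adj x y
        · by_cases h2' : D.Adj y x
          · simp [h1, h2']
          · simp [h1, h2']
        · simp [h1, h2, neg_mul]
    · intro b _ hb
      rw [if_neg]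
      rintro ⟨h1, h2⟩
      exact hb (Subtype.ext (Prod.ext h1.symm h2.symm))
    · intro h; exact absurd (Finset.mem_univ _) h
  · have hz : ∀ b : GArc G, (if x = arcO b ∧ y = arcT b then
        ((1 / Real.sqrt (G.degree x) : ℝ) : ℂ)
          * Complex.exp ((etaFun D η b : ℂ) * Complex.I)
          * ((1 / Real.sqrt (G.degree y) : ℝ) : ℂ) else 0) = 0 := by
      intro b
      rw [if_neg]
      rintro ⟨h1, h2⟩
      exact hadj (h1 ▸ h2 ▸ b.2)
    rw [Finset.sum_congr rfl fun b _ => hz b, Finset.sum_const_zero]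
    have hH : Heta D η x y = 0 := by
      have h1 : ¬ D.Adj x y := fun h => hadj (Or.inl h)
      have h2 : ¬ D.Adj y x := fun h => hadj (Or.inr h)
      simp [Heta, h1, h2]
    simp [hH]
end
end

section
/- Let G be a weakly connected k-regular digraph equipped with the (π/2)-function θ, and let H = H_{π/2}(G) be its Hermitian adjacency matrix. Then H has the eigenvalue k with multiplicity at most one and the eigenvalue −k with multiplicity at most one. Moreover: (1) H has eigenvalue k if and only if ℐ(c) ∈ 2πℤ for every closed path c in G^±; and (2) H has eigenvalue −k if and only if either (G^± is bipartite and ℐ(c) ∈ 2πℤ for every closed path c) or (G^± is non-bipartite and for every closed path c, ℐ(c) ∈ 2πℤ when c has even length and ℐ(c) ∈ 2π(ℤ + 1/2) when c has odd length). -/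
open Matrix Polynomial

noncomputable section

variable {V : Type} [Fintype V] [DecidableEq V]

namespace StmtAux


lemma eval_charpoly' (A : Matrix V V ℂ) (μ : ℂ) :
    A.charpoly.eval μ = (Matrix.diagonal (fun _ => μ) - A).det := by
  rw [Matrix.charpoly, ← Polynomial.coe_evalRingHom, RingHom.map_det]
  congr 1
  ext i j
  by_cases h : i = j
  · subst h
    simp [charmatrix_apply_eq]
  · simp [charmatrix_apply_ne _ _ _ h, Matrix.diagonal_apply_ne _ h]

lemma diag_mulVec (μ : ℂ) (v : V → ℂ) :
    Matrix.diagonal (fun _ : V => μ) *ᵥ v = μ • v := by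
  ext x
  simp [Matrix.mulVec_diagonal]

lemma mem_roots_iff_eig (A : Matrix V V ℂ) (μ : ℂ) :
    μ ∈ A.charpoly.roots ↔ ∃ v, v ≠ 0 ∧ A *ᵥ v = μ • v := by
  rw [Polynomial.mem_roots (A.charpoly_monic.ne_zero), Polynomial.IsRoot, eval_charpoly',
    ← Matrix.exists_mulVec_eq_zero_iff]
  constructor
  · rintro ⟨v, hv, he⟩
    refine ⟨v, hv, ?_⟩
    rw [Matrix.sub_mulVec, diag_mulVec, sub_eq_zero] at he
    exact he.symm
  · rintro ⟨v, hv, he⟩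
    refine ⟨v, hv, ?_⟩
    rw [Matrix.sub_mulVec, diag_mulVec, sub_eq_zero, he]

end StmtAux

namespace StmtAux2


lemma charpoly_conj (U Dg : Matrix V V ℂ) (hU : U * star U = 1) (hU' : star U * U = 1) :
    (U * Dg * star U).charpoly = Dg.charpoly := by
  have hscalar : Matrix.scalar V (X : ℂ[X]) = (X : ℂ[X]) • (1 : Matrix V V ℂ[X]) := by
    ext i j
    by_cases h : i = j <;>
      simp [Matrix.scalar_apply, Matrix.one_apply, Matrix.diagonal_apply, h]
  have hmapU : ((C : ℂ →+* ℂ[X]).mapMatrix U) * ((C : ℂ →+* ℂ[X]).mapMatrix (star U)) = 1 := by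
    rw [← _root_.map_mul, hU, _root_.map_one]
  have key : charmatrix (U * Dg * star U)
      = (C : ℂ →+* ℂ[X]).mapMatrix U * charmatrix Dg * (C : ℂ →+* ℂ[X]).mapMatrix (star U) := by
    unfold charmatrix
    rw [Matrix.mul_sub, Matrix.sub_mul, _root_.map_mul, _root_.map_mul, hscalar]
    congr 1
    rw [Matrix.mul_smul, mul_one, Matrix.smul_mul, hmapU]
  unfold Matrix.charpoly
  have hmapU' : ((C : ℂ →+* ℂ[X]).mapMatrix (star U)) * ((C : ℂ →+* ℂ[X]).mapMatrix U) = 1 := by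
    rw [← _root_.map_mul, hU', _root_.map_one]
  rw [key, Matrix.det_mul, Matrix.det_mul, mul_comm, ← mul_assoc, ← Matrix.det_mul, hmapU']
  simp

lemma charpoly_diag (d : V → ℂ) :
    (Matrix.diagonal d).charpoly = ((Finset.univ.val.map d).map (fun a => X - C a)).prod := by
  unfold Matrix.charpoly
  have h1 : charmatrix (Matrix.diagonal d) = Matrix.diagonal (fun i => (X : ℂ[X]) - C (d i)) := by
    ext i j
    by_cases h : i = j
    · subst h; simp
    · simp [charmatrix_apply_ne _ _ _ h, Matrix.diagonal_apply_ne _ h]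
  rw [h1, Matrix.det_diagonal, Multiset.map_map]
  rfl

lemma herm_roots (A : Matrix V V ℂ) (hA : A.IsHermitian) :
    A.charpoly.roots = Finset.univ.val.map (fun i => (hA.eigenvalues i : ℂ)) := by
  have hU : (hA.eigenvectorUnitary : Matrix V V ℂ) * star (hA.eigenvectorUnitary : Matrix V V ℂ) = 1 :=
    Unitary.mul_star_self_of_mem hA.eigenvectorUnitary.2
  have hU' : star (hA.eigenvectorUnitary : Matrix V V ℂ) * (hA.eigenvectorUnitary : Matrix V V ℂ) = 1 :=
    Unitary.star_mul_self_of_mem hA.eigenvectorUnitary.2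
  conv_lhs => rw [hA.spectral_theorem, Unitary.conjStarAlgAut_apply, charpoly_conj _ _ hU hU', charpoly_diag]
  rw [Polynomial.roots_multiset_prod_X_sub_C]
  rfl


lemma herm_count_le_one (A : Matrix V V ℂ) (hA : A.IsHermitian) (μ : ℂ)
    (huniq : ∀ v w : V → ℂ, v ≠ 0 → w ≠ 0 → A *ᵥ v = μ • v → A *ᵥ w = μ • w →
      ∃ c : ℂ, w = c • v) :
    A.charpoly.roots.count μ ≤ 1 := by
  by_contra hlt
  push_neg at hlt
  rw [herm_roots A hA, Multiset.count_map] at hlt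
  have hlt' : 1 < (Finset.univ.filter fun i => μ = (hA.eigenvalues i : ℂ)).card := by
    exact hlt
  obtain ⟨i, hi, j, hj, hij⟩ := Finset.one_lt_card.mp hlt'
  rw [Finset.mem_filter] at hi hj
  set v : V → ℂ := ⇑(hA.eigenvectorBasis i) with hvdef
  set w : V → ℂ := ⇑(hA.eigenvectorBasis j) with hwdef
  have hveig : A *ᵥ v = μ • v := by
    rw [hvdef, hA.mulVec_eigenvectorBasis i]
    ext x
    simp [hi.2, Complex.real_smul]
  have hweig : A *ᵥ w = μ • w := by
    rw [hwdef, hA.mulVec_eigenvectorBasis j]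
    ext x
    simp [hj.2, Complex.real_smul]
  have hnorm : ∀ l : V, ‖hA.eigenvectorBasis l‖ = 1 := fun l =>
    hA.eigenvectorBasis.orthonormal.1 l
  have hne : ∀ l : V, (⇑(hA.eigenvectorBasis l) : V → ℂ) ≠ 0 := by
    intro l h0
    have h1 : hA.eigenvectorBasis l = 0 := by
      ext x
      exact congrFun h0 x
    have h2 := hnorm l
    rw [h1, norm_zero] at h2
    exact one_ne_zero h2.symm
  obtain ⟨c, hc⟩ := huniq v w (hne i) (hne j) hveig hweig
  have hsm : hA.eigenvectorBasis j = c • hA.eigenvectorBasis i := by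
    ext x
    exact congrFun hc x
  have horth : inner ℂ (hA.eigenvectorBasis i) (hA.eigenvectorBasis j) = (0 : ℂ) :=
    hA.eigenvectorBasis.orthonormal.2 hij
  rw [hsm, inner_smul_right, inner_self_eq_norm_sq_to_K, hnorm i] at horth
  simp at horth
  rw [horth] at hc
  simp only [zero_smul] at hc
  exact hne j hc

end StmtAux2

namespace StmtAux3
set_option linter.unusedSectionVars false

variable (D : Dgraph V) (η : ℝ)

lemma underlying_adj {x y : V} (h : D.underlying.Adj x y) : D.Adj x y ∨ D.Adj y x := h

lemma Heta_eq_zero {x y : V} (h : ¬ D.underlying.Adj x y) : Heta D η x y = 0 := by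
  have h1 : ¬ D.Adj x y := fun hxy => h (Or.inl hxy)
  have h2 : ¬ D.Adj y x := fun hxy => h (Or.inr hxy)
  simp [Heta, h1, h2]

lemma Heta_conj (x y : V) : Heta D η y x = (starRingEnd ℂ) (Heta D η x y) := by
  unfold Heta
  by_cases h1 : D.Adj x y <;> by_cases h2 : D.Adj y x <;>
    simp [h1, h2, ← Complex.exp_conj, _root_.map_mul, Complex.conj_I, Complex.conj_ofReal] <;> ring_nf

lemma Heta_arc (a : GArc D.underlying) :
    Heta D η (arcO a) (arcT a) = Complex.exp ((etaFun D η a : ℝ) * Complex.I) := by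
  obtain ⟨⟨x, y⟩, hxy⟩ := a
  show Heta D η x y = _
  by_cases h1 : D.Adj x y <;> by_cases h2 : D.Adj y x
  · simp [Heta, etaFun, arcO, arcT, h1, h2]
  · simp [Heta, etaFun, arcO, arcT, h1, h2]
  · simp only [Heta, etaFun, arcO, arcT, h1, h2, if_true, if_false]
    push_cast
    ring_nf
  · exact absurd (underlying_adj D hxy) (by simp [h1, h2])

lemma Heta_arc_rev (a : GArc D.underlying) :
    Heta D η (arcT a) (arcO a) = Complex.exp (-(etaFun D η a : ℝ) * Complex.I) := by
  rw [Heta_conj, Heta_arc, ← Complex.exp_conj]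
  congr 1
  rw [_root_.map_mul, Complex.conj_I, Complex.conj_ofReal]
  ring

lemma Heta_mul_rev {x y : V} (h : D.underlying.Adj x y) :
    Heta D η x y * Heta D η y x = 1 := by
  have : Heta D η x y = Heta D η (arcO ⟨(x,y),h⟩) (arcT ⟨(x,y),h⟩) := rfl
  rw [this, Heta_arc, show Heta D η y x = Heta D η (arcT ⟨(x,y),h⟩) (arcO ⟨(x,y),h⟩) from rfl,
    Heta_arc_rev, ← Complex.exp_add]
  ring_nf
  exact Complex.exp_zero

lemma Heta_abs {x y : V} (h : D.underlying.Adj x y) : ‖Heta D η x y‖ = 1 := by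
  have : Heta D η x y = Heta D η (arcO ⟨(x,y),h⟩) (arcT ⟨(x,y),h⟩) := rfl
  rw [this, Heta_arc, Complex.norm_exp]
  simp

lemma etaFun_inv (a : GArc D.underlying) : etaFun D η (arcInv a) = - etaFun D η a := by
  obtain ⟨⟨x, y⟩, hxy⟩ := a
  by_cases h1 : D.Adj x y <;> by_cases h2 : D.Adj y x
  · simp [etaFun, arcInv, arcO, arcT, h1, h2]
  · simp [etaFun, arcInv, arcO, arcT, h1, h2]
  · simp [etaFun, arcInv, arcO, arcT, h1, h2]
  · exact absurd (underlying_adj D hxy) (by simp [h1, h2])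

lemma Heta_isHermitian : (Heta D η).IsHermitian := by
  ext x y
  rw [Matrix.conjTranspose_apply]
  exact (Heta_conj D η y x).symm


lemma align {ι : Type} (s : Finset ι) (u : ι → ℂ) (z : ℂ)
    (hb : ∀ i ∈ s, ‖u i‖ ≤ ‖z‖)
    (hsum : ∑ i ∈ s, u i = (s.card : ℂ) * z) :
    ∀ i ∈ s, u i = z := by
  have habs : ∀ i ∈ s, ((starRingEnd ℂ) z * u i).re ≤ ‖z‖ ^ 2 := by
    intro i hi
    calc ((starRingEnd ℂ) z * u i).re ≤ ‖(starRingEnd ℂ) z * u i‖ :=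
          Complex.re_le_norm _
      _ = ‖z‖ * ‖u i‖ := by rw [norm_mul, Complex.norm_conj]
      _ ≤ ‖z‖ * ‖z‖ :=
          mul_le_mul_of_nonneg_left (hb i hi) (norm_nonneg z)
      _ = ‖z‖ ^ 2 := (sq (‖z‖)).symm
  have hsum2 : ∑ i ∈ s, ((starRingEnd ℂ) z * u i).re = (s.card : ℝ) * ‖z‖ ^ 2 := by
    have h1 : ∑ i ∈ s, (starRingEnd ℂ) z * u i = (starRingEnd ℂ) z * ((s.card : ℂ) * z) := by
      rw [← Finset.mul_sum, hsum]
    have h2 := congrArg Complex.re h1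
    rw [Complex.re_sum] at h2
    rw [h2]
    have h3 : (starRingEnd ℂ) z * ((s.card : ℂ) * z) = (s.card : ℂ) * ((starRingEnd ℂ) z * z) := by
      ring
    rw [h3, Complex.conj_mul', ← Complex.ofReal_pow, ← Complex.ofReal_natCast,
      ← Complex.ofReal_mul, Complex.ofReal_re]
  have heach : ∀ i ∈ s, ((starRingEnd ℂ) z * u i).re = ‖z‖ ^ 2 := by
    by_contra hcon
    push_neg at hcon
    obtain ⟨i, hi, hne⟩ := hcon
    have hstrict : ((starRingEnd ℂ) z * u i).re < ‖z‖ ^ 2 :=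
      lt_of_le_of_ne (habs i hi) hne
    have := Finset.sum_lt_sum habs ⟨i, hi, hstrict⟩
    rw [hsum2, Finset.sum_const, nsmul_eq_mul] at this
    exact lt_irrefl _ this
  intro i hi
  by_cases hz : z = 0
  · have hb' := hb i hi
    rw [hz] at hb' ⊢
    simp only [norm_zero] at hb'
    exact norm_eq_zero.mp (le_antisymm hb' (norm_nonneg _))
  · set w := (starRingEnd ℂ) z * u i with hw
    have h1 : w.re = ‖z‖ ^ 2 := heach i hi
    have habsw : ‖w‖ ≤ ‖z‖ ^ 2 := by
      rw [hw, norm_mul, Complex.norm_conj, sq]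
      exact mul_le_mul_of_nonneg_left (hb i hi) (norm_nonneg z)
    have habsw' : ‖w‖ = w.re := le_antisymm (h1 ▸ habsw) (Complex.re_le_norm w)
    have him : w.im = 0 := by
      have h4 : w.re ^ 2 + w.im ^ 2 = ‖w‖ ^ 2 := by
        rw [Complex.sq_norm, Complex.normSq_apply]
        ring
      rw [habsw'] at h4
      nlinarith [sq_nonneg w.im]
    have hweq : w = ((‖z‖ : ℝ) : ℂ) ^ 2 := by
      rw [← Complex.ofReal_pow]
      apply Complex.ext
      · rw [Complex.ofReal_re]; exact h1
      · rw [Complex.ofReal_im]; exact him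
    have hzz : (starRingEnd ℂ) z * z = ((‖z‖ : ℝ) : ℂ) ^ 2 := Complex.conj_mul' z
    have hcz : (starRingEnd ℂ) z ≠ 0 := by
      simpa using hz
    exact mul_left_cancel₀ hcz (hweq.trans hzz.symm)

lemma propagate {G : SimpleGraph V} (P : V → Prop) (hstep : ∀ x y, G.Adj x y → P x → P y) :
    ∀ {x y : V}, G.Walk x y → P x → P y := by
  intro x y w
  induction w with
  | nil => exact id
  | cons h p ih => exact fun hx => ih (hstep _ _ h hx)

lemma eigen_structure (k : ℕ) (hconn : D.underlying.Connected)
    (hreg : ∀ v, D.underlying.degree v = k) (ε : ℂ) (hε : ε = 1 ∨ ε = -1)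
    (v : V → ℂ) (hv0 : v ≠ 0) (hv : Heta D η *ᵥ v = (ε * (k : ℂ)) • v) :
    (∀ x, v x ≠ 0) ∧ ∀ x y, D.underlying.Adj x y → v y = ε * Heta D η y x * v x := by
  have hε2 : ε * ε = 1 := by rcases hε with h | h <;> simp [h]
  have hεabs : ‖ε‖ = 1 := by rcases hε with h | h <;> simp [h]
  have : Nonempty V := hconn.nonempty
  obtain ⟨x₀, -, hmax⟩ := Finset.exists_max_image Finset.univ (fun x => ‖v x‖)
    ⟨Classical.arbitrary V, Finset.mem_univ _⟩
  set M := ‖v x₀‖ with hM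
  have hmax' : ∀ x, ‖v x‖ ≤ M := fun x => hmax x (Finset.mem_univ x)
  have step : ∀ x, ‖v x‖ = M → ∀ y, D.underlying.Adj x y →
      ε * Heta D η x y * v y = v x := by
    intro x hx y hy
    have halign := align (D.underlying.neighborFinset x)
      (fun y => ε * Heta D η x y * v y) (v x) ?_ ?_
    · exact halign y ((SimpleGraph.mem_neighborFinset _ _ _).mpr hy)
    · intro i hi
      rw [SimpleGraph.mem_neighborFinset] at hi
      rw [norm_mul, norm_mul, hεabs, Heta_abs D η hi, one_mul, one_mul, hx]
      exact hmax' i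
    · have hzero : ∀ y ∈ Finset.univ, y ∉ D.underlying.neighborFinset x →
          ε * Heta D η x y * v y = 0 := by
        intro y _ hy'
        rw [SimpleGraph.mem_neighborFinset] at hy'
        rw [Heta_eq_zero D η hy']
        ring
      change ∑ y ∈ D.underlying.neighborFinset x, ε * Heta D η x y * v y
          = ((D.underlying.neighborFinset x).card : ℂ) * v x
      rw [Finset.sum_subset (Finset.subset_univ _) hzero]
      have hmv : ∑ y, Heta D η x y * v y = (ε * (k : ℂ)) * v x := by
        have := congrFun hv x
        simpa [Matrix.mulVec, dotProduct] using this
      rw [show ∑ y, ε * Heta D η x y * v y = ε * ∑ y, Heta D η x y * v y by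
        rw [Finset.mul_sum]; exact Finset.sum_congr rfl fun y _ => by ring]
      rw [hmv, SimpleGraph.card_neighborFinset_eq_degree, hreg x]
      calc ε * (ε * (k : ℂ) * v x) = (ε * ε) * ((k : ℂ) * v x) := by ring
        _ = (k : ℂ) * v x := by rw [hε2, one_mul]
  have hM0 : 0 < M := by
    obtain ⟨x, hx⟩ := Function.ne_iff.mp hv0
    exact lt_of_lt_of_le (norm_pos_iff.mpr hx) (hmax' x)
  have allM : ∀ x, ‖v x‖ = M := by
    intro x
    obtain ⟨w⟩ := hconn.preconnected x₀ x
    refine propagate (fun x => ‖v x‖ = M) ?_ w rfl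
    intro a b hab ha
    have h1 := step a ha b hab
    have h2 := congrArg norm h1
    rw [norm_mul, norm_mul, hεabs, Heta_abs D η hab, one_mul, one_mul, ha] at h2
    exact h2
  have hrel : ∀ x y, D.underlying.Adj x y → v y = ε * Heta D η y x * v x := by
    intro x y hxy
    have h1 := step x (allM x) y hxy
    calc v y = (ε * ε) * (Heta D η x y * Heta D η y x) * v y := by
          rw [hε2, Heta_mul_rev D η hxy]; ring
      _ = ε * Heta D η y x * (ε * Heta D η x y * v y) := by ring
      _ = ε * Heta D η y x * v x := by rw [h1]
  exact ⟨fun x => by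
    have := allM x
    intro h0
    rw [h0] at this
    simp only [norm_zero] at this
    exact (ne_of_gt hM0) this.symm, hrel⟩


lemma chain_prod {G : SimpleGraph V} (v : V → ℂ) (f : GArc G → ℂ)
    (hrel : ∀ a : GArc G, v (arcT a) = f a * v (arcO a)) :
    ∀ (l : List (GArc G)) (hl : l ≠ []), l.Chain' (fun a b => arcT a = arcO b) →
      v (arcT (l.getLast hl)) = (l.map f).prod * v (arcO (l.head hl)) := by
  intro l
  induction l with
  | nil => intro hl; exact absurd rfl hl
  | cons a l ih =>
    intro hl hch
    match l, hch with
    | [], _ => simpa using hrel a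
    | b :: l', hch =>
      unfold List.Chain' at hch
      rw [List.isChain_cons_cons] at hch
      obtain ⟨hab, hch'⟩ := hch
      have hne' : b :: l' ≠ [] := by simp
      rw [List.getLast_cons hne', List.head_cons]
      calc v (arcT ((b :: l').getLast hne'))
          = ((b :: l').map f).prod * v (arcO ((b :: l').head hne')) := ih hne' hch'
        _ = ((b :: l').map f).prod * v (arcT a) := by rw [List.head_cons, ← hab]
        _ = ((b :: l').map f).prod * (f a * v (arcO a)) := by rw [hrel a]
        _ = ((a :: b :: l').map f).prod * v (arcO a) := by
            simp only [List.map_cons, List.prod_cons]; ring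

lemma closed_prod {G : SimpleGraph V} (v : V → ℂ) (f : GArc G → ℂ)
    (hrel : ∀ a : GArc G, v (arcT a) = f a * v (arcO a))
    (hv : ∀ x, v x ≠ 0) (c : ClosedPath G) :
    (c.arcs.map f).prod = 1 := by
  have h1 := chain_prod v f hrel c.arcs c.ne c.chain
  rw [c.closed] at h1
  have h2 := hv (arcO (c.arcs.head c.ne))
  nth_rewrite 1 [← one_mul (v (arcO (c.arcs.head c.ne)))] at h1
  exact (mul_right_cancel₀ h2 h1).symm

lemma colorable_even {G : SimpleGraph V} (hcol : G.Colorable 2) (c : ClosedPath G) :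
    Even c.arcs.length := by
  obtain ⟨C⟩ := hcol
  set v : V → ℂ := fun x => (-1 : ℂ) ^ ((C x : Fin 2) : ℕ) with hv
  have hkey : ∀ a b : Fin 2, a ≠ b → ((-1 : ℂ)) ^ (b : ℕ) = -1 * (-1 : ℂ) ^ (a : ℕ) := by
    intro a b h
    fin_cases a <;> fin_cases b <;> simp_all <;> norm_num
  have hrel : ∀ a : GArc G, v (arcT a) = (-1 : ℂ) * v (arcO a) := by
    intro a
    exact hkey _ _ (C.valid a.2)
  have hne : ∀ x, v x ≠ 0 := by
    intro x
    simp [hv, pow_ne_zero]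
  have h1 := closed_prod v (fun _ => (-1 : ℂ)) hrel hne c
  rw [List.map_const', List.prod_replicate] at h1
  have h2 : ((-1 : ℂ)) ^ c.arcs.length = 1 := by simpa using h1
  rcases Nat.even_or_odd c.arcs.length with he | ho
  · exact he
  · rw [ho.neg_one_pow] at h2
    norm_num at h2


/-- arc of a dart -/
def dartArc {G : SimpleGraph V} (d : G.Dart) : GArc G := ⟨d.toProd, d.adj⟩

/-- walk product -/
def wp (D : Dgraph V) (η : ℝ) (ε : ℂ) {x y : V} (p : D.underlying.Walk x y) : ℂ :=
  (p.darts.map (fun d => ε * Complex.exp (-(etaFun D η (dartArc d) : ℝ) * Complex.I))).prod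

lemma wp_nil {x : V} : wp D η ε (SimpleGraph.Walk.nil : D.underlying.Walk x x) = 1 := rfl

lemma wp_append {ε : ℂ} {x y z : V} (p : D.underlying.Walk x y) (q : D.underlying.Walk y z) :
    wp D η ε (p.append q) = wp D η ε p * wp D η ε q := by
  unfold wp
  rw [SimpleGraph.Walk.darts_append, List.map_append, List.prod_append]

lemma wp_reverse {ε : ℂ} (hε2 : ε * ε = 1) {x y : V} (p : D.underlying.Walk x y) :
    wp D η ε p.reverse * wp D η ε p = 1 := by
  induction p with
  | nil => simp [wp_nil]
  | @cons u w y h p ih =>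
    rw [SimpleGraph.Walk.reverse_cons, wp_append]
    have hsingle : ∀ (s t z : V) (hst : D.underlying.Adj s t) (q : D.underlying.Walk t z),
        wp D η ε (SimpleGraph.Walk.cons hst q) = (ε * Complex.exp
          (-(etaFun D η (⟨(s, t), hst⟩ : GArc D.underlying) : ℝ) * Complex.I)) * wp D η ε q := by
      intro s t z hst q
      unfold wp
      rw [SimpleGraph.Walk.darts_cons, List.map_cons, List.prod_cons]
      rfl
    rw [hsingle _ _ _ h.symm SimpleGraph.Walk.nil, hsingle _ _ _ h p]
    rw [wp_nil, mul_one]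
    have hinv : etaFun D η (⟨(w, u), h.symm⟩ : GArc D.underlying)
        = - etaFun D η (⟨(u, w), h⟩ : GArc D.underlying) := by
      have := etaFun_inv D η (⟨(u, w), h⟩ : GArc D.underlying)
      exact this
    calc wp D η ε p.reverse * (ε * Complex.exp (-(etaFun D η (⟨(w, u), h.symm⟩ : GArc D.underlying) : ℝ) * Complex.I)) *
          (ε * Complex.exp (-(etaFun D η (⟨(u, w), h⟩ : GArc D.underlying) : ℝ) * Complex.I) * wp D η ε p)
        = (wp D η ε p.reverse * wp D η ε p) * (ε * ε) *
          (Complex.exp (-(etaFun D η (⟨(w, u), h.symm⟩ : GArc D.underlying) : ℝ) * Complex.I) *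
           Complex.exp (-(etaFun D η (⟨(u, w), h⟩ : GArc D.underlying) : ℝ) * Complex.I)) := by ring
      _ = 1 := by
          rw [ih, hε2, ← Complex.exp_add, hinv]
          push_cast
          ring_nf
          simp [Complex.exp_zero]

lemma wp_ne_zero {ε : ℂ} (hε2 : ε * ε = 1) {x y : V} (p : D.underlying.Walk x y) :
    wp D η ε p ≠ 0 :=
  right_ne_zero_of_mul_eq_one (wp_reverse D η hε2 p)

lemma wp_closed {ε : ℂ}
    (hcond : ∀ c : ClosedPath D.underlying,
      (c.arcs.map (fun a => ε * Complex.exp (-(etaFun D η a : ℝ) * Complex.I))).prod = 1)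
    {x : V} (p : D.underlying.Walk x x) : wp D η ε p = 1 := by
  by_cases hd : p.darts = []
  · unfold wp
    rw [hd]
    rfl
  · have hne : p.darts.map (dartArc (G := D.underlying)) ≠ [] := by
      simpa using hd
    have hchain : (p.darts.map (dartArc (G := D.underlying))).Chain'
        (fun a b => arcT a = arcO b) := by
      unfold List.Chain'
      rw [List.isChain_map]
      exact (p.isChain_dartAdj_darts).imp (fun d d' hdd => hdd)
    have hclosed : arcT ((p.darts.map (dartArc (G := D.underlying))).getLast hne)
        = arcO ((p.darts.map (dartArc (G := D.underlying))).head hne) := by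
      rw [List.getLast_map, List.head_map]
      show (p.darts.getLast _).snd = (p.darts.head _).fst
      rw [p.getLast_darts_eq_lastDart, p.head_darts_eq_firstDart]
      simp
    set c : ClosedPath D.underlying := ⟨p.darts.map (dartArc (G := D.underlying)), hne, hchain, hclosed⟩
    have := hcond c
    unfold wp
    rw [show c.arcs = p.darts.map (dartArc (G := D.underlying)) from rfl, List.map_map] at this
    exact this

lemma exists_eigen (k : ℕ) (hconn : D.underlying.Connected)
    (hreg : ∀ v, D.underlying.degree v = k) (ε : ℂ) (hε2 : ε * ε = 1)
    (hcond : ∀ c : ClosedPath D.underlying,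
      (c.arcs.map (fun a => ε * Complex.exp (-(etaFun D η a : ℝ) * Complex.I))).prod = 1) :
    ∃ v : V → ℂ, v ≠ 0 ∧ Heta D η *ᵥ v = (ε * (k : ℂ)) • v := by
  have : Nonempty V := hconn.nonempty
  set x₀ : V := Classical.arbitrary V
  have hreach : ∀ x, Nonempty (D.underlying.Walk x₀ x) := fun x => hconn.preconnected x₀ x
  set v : V → ℂ := fun x => wp D η ε (Classical.choice (hreach x)) with hvdef
  have hindep : ∀ (x : V) (p : D.underlying.Walk x₀ x), wp D η ε p = v x := by
    intro x p
    set q := Classical.choice (hreach x)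
    have h1 : wp D η ε (p.append q.reverse) = 1 := wp_closed D η hcond _
    rw [wp_append] at h1
    have h2 : wp D η ε q.reverse * wp D η ε q = 1 := wp_reverse D η hε2 q
    have h3 : wp D η ε p = wp D η ε p * (wp D η ε q.reverse * wp D η ε q) := by rw [h2, mul_one]
    rw [h3, ← mul_assoc, h1, one_mul]
  have hvne : ∀ x, v x ≠ 0 := fun x => wp_ne_zero D η hε2 _
  refine ⟨v, fun h0 => hvne x₀ (congrFun h0 x₀), ?_⟩
  ext x
  have hkey : ∀ y, D.underlying.Adj x y → Heta D η x y * v y = ε * v x := by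
    intro y hxy
    set a : GArc D.underlying := (⟨(x, y), hxy⟩ : GArc D.underlying) with ha
    have hcv : wp D η ε ((Classical.choice (hreach x)).concat hxy) = v y := hindep y _
    have hconcat : wp D η ε ((Classical.choice (hreach x)).concat hxy)
        = v x * (ε * Complex.exp (-(etaFun D η a : ℝ) * Complex.I)) := by
      unfold wp
      rw [SimpleGraph.Walk.darts_concat, List.map_concat, List.prod_concat]
      rfl
    have hH : Heta D η x y = Complex.exp ((etaFun D η a : ℝ) * Complex.I) := Heta_arc D η a
    have hee : Complex.exp ((etaFun D η a : ℝ) * Complex.I)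
        * Complex.exp (-(etaFun D η a : ℝ) * Complex.I) = 1 := by
      rw [← Complex.exp_add, show ((etaFun D η a : ℝ) : ℂ) * Complex.I
          + -((etaFun D η a : ℝ) : ℂ) * Complex.I = 0 by ring]
      exact Complex.exp_zero
    rw [← hcv, hconcat, hH]
    linear_combination (v x * ε) * hee
  have hmv : (Heta D η *ᵥ v) x = ∑ y, Heta D η x y * v y := by
    simp [Matrix.mulVec, dotProduct]
  rw [hmv]
  have hzero : ∀ y ∈ Finset.univ, y ∉ D.underlying.neighborFinset x → Heta D η x y * v y = 0 := by
    intro y _ hy'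
    rw [SimpleGraph.mem_neighborFinset] at hy'
    rw [Heta_eq_zero D η hy', zero_mul]
  rw [← Finset.sum_subset (Finset.subset_univ _) hzero]
  rw [Finset.sum_congr rfl (fun y hy => hkey y ((SimpleGraph.mem_neighborFinset _ _ _).mp hy))]
  rw [Finset.sum_const, SimpleGraph.card_neighborFinset_eq_degree, hreg x]
  rw [nsmul_eq_mul]
  simp only [Pi.smul_apply, smul_eq_mul]
  ring


lemma list_prod_eps {α : Type} (l : List α) (f : α → ℝ) (ε : ℂ) :
    (l.map (fun a => ε * Complex.exp (-(f a : ℝ) * Complex.I))).prod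
      = ε ^ l.length * Complex.exp (-((l.map f).sum : ℝ) * Complex.I) := by
  induction l with
  | nil => simp
  | cons a l ih =>
    simp only [List.map_cons, List.prod_cons, List.sum_cons, List.length_cons, ih, pow_succ]
    rw [show (-((f a + (l.map f).sum : ℝ) : ℂ) * Complex.I)
        = (-(f a : ℝ) * Complex.I) + (-(((l.map f).sum : ℝ) : ℂ) * Complex.I) by push_cast; ring]
    rw [Complex.exp_add]
    ring

lemma exp_I_one_iff (x : ℝ) : Complex.exp ((x : ℝ) * Complex.I) = 1 ↔ in2piZ x := by
  rw [Complex.exp_eq_one_iff]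
  constructor
  · rintro ⟨n, hn⟩
    refine ⟨n, ?_⟩
    have h2 : ((x : ℝ) : ℂ) = ((2 * Real.pi * (n : ℝ) : ℝ) : ℂ) := by
      have := mul_right_cancel₀ Complex.I_ne_zero
        (hn.trans (by push_cast; ring : ((n : ℂ) * (2 * Real.pi * Complex.I))
          = ((2 * Real.pi * (n : ℝ) : ℝ) : ℂ) * Complex.I))
      exact this
    exact_mod_cast h2
  · rintro ⟨m, hm⟩
    exact ⟨m, by rw [hm]; push_cast; ring⟩

lemma exp_I_neg_one_iff (x : ℝ) : Complex.exp ((x : ℝ) * Complex.I) = -1 ↔ in2piZhalf x := by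
  have hsplit : Complex.exp (((x - Real.pi : ℝ) : ℂ) * Complex.I)
      = Complex.exp ((x : ℝ) * Complex.I) * Complex.exp (-(Real.pi : ℂ) * Complex.I) := by
    rw [← Complex.exp_add]
    congr 1
    push_cast
    ring
  have hpi : Complex.exp (-(Real.pi : ℂ) * Complex.I) = -1 := by
    have h1 : Complex.exp ((Real.pi : ℂ) * Complex.I) = -1 := Complex.exp_pi_mul_I
    have h2 : Complex.exp (-(Real.pi : ℂ) * Complex.I) * Complex.exp ((Real.pi : ℂ) * Complex.I) = 1 := by
      rw [← Complex.exp_add]; ring_nf; exact Complex.exp_zero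
    rw [h1] at h2
    linear_combination -h2
  have hiff : Complex.exp ((x : ℝ) * Complex.I) = -1
      ↔ Complex.exp (((x - Real.pi : ℝ) : ℂ) * Complex.I) = 1 := by
    rw [hsplit, hpi]
    constructor
    · intro h; rw [h]; ring
    · intro h
      have := congrArg (fun z => z * (-1 : ℂ)) h
      calc Complex.exp ((x : ℝ) * Complex.I)
          = Complex.exp (↑x * Complex.I) * -1 * -1 := by ring
        _ = 1 * (-1) := by rw [this]
        _ = -1 := by ring
  rw [hiff, exp_I_one_iff]
  constructor
  · rintro ⟨m, hm⟩
    exact ⟨m, by linarith [hm]⟩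
  · rintro ⟨m, hm⟩
    refine ⟨m, ?_⟩
    rw [hm]
    ring

lemma in2piZ_neg (x : ℝ) : in2piZ (-x) ↔ in2piZ x := by
  constructor <;> rintro ⟨m, hm⟩ <;> exact ⟨-m, by push_cast; linarith⟩

lemma in2piZhalf_neg (x : ℝ) : in2piZhalf (-x) ↔ in2piZhalf x := by
  constructor <;> rintro ⟨m, hm⟩ <;> refine ⟨-m - 1, ?_⟩ <;> push_cast <;> linarith

lemma exp_neg_I_one_iff (x : ℝ) : Complex.exp (-(x : ℂ) * Complex.I) = 1 ↔ in2piZ x := by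
  rw [show (-(x : ℂ) * Complex.I) = ((-x : ℝ) : ℂ) * Complex.I by push_cast; ring,
    exp_I_one_iff, in2piZ_neg]

lemma exp_neg_I_neg_one_iff (x : ℝ) : Complex.exp (-(x : ℂ) * Complex.I) = -1 ↔ in2piZhalf x := by
  rw [show (-(x : ℂ) * Complex.I) = ((-x : ℝ) : ℂ) * Complex.I by push_cast; ring,
    exp_I_neg_one_iff, in2piZhalf_neg]

lemma cond_rw (ε : ℂ) (c : ClosedPath D.underlying) :
    (c.arcs.map (fun a => ε * Complex.exp (-(etaFun D η a : ℝ) * Complex.I))).prod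
      = ε ^ c.arcs.length * Complex.exp (-((pathSum (etaFun D η) c : ℝ) : ℂ) * Complex.I) := by
  rw [list_prod_eps]
  rfl

lemma cond_one_iff :
    (∀ c : ClosedPath D.underlying,
      (c.arcs.map (fun a => (1 : ℂ) * Complex.exp (-(etaFun D η a : ℝ) * Complex.I))).prod = 1)
    ↔ (∀ c : ClosedPath D.underlying, in2piZ (pathSum (etaFun D η) c)) := by
  constructor <;> intro h c
  · have h1 := h c
    rw [cond_rw, one_pow, one_mul] at h1
    exact (exp_neg_I_one_iff _).mp h1
  · rw [cond_rw, one_pow, one_mul]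
    exact (exp_neg_I_one_iff _).mpr (h c)

lemma cond_neg_iff :
    (∀ c : ClosedPath D.underlying,
      (c.arcs.map (fun a => (-1 : ℂ) * Complex.exp (-(etaFun D η a : ℝ) * Complex.I))).prod = 1)
    ↔ (∀ c : ClosedPath D.underlying,
        (Even c.arcs.length → in2piZ (pathSum (etaFun D η) c)) ∧
        (Odd c.arcs.length → in2piZhalf (pathSum (etaFun D η) c))) := by
  constructor
  · intro h c
    have h1 := h c
    rw [cond_rw] at h1
    constructor
    · intro he
      rw [he.neg_one_pow, one_mul] at h1
      exact (exp_neg_I_one_iff _).mp h1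
    · intro ho
      rw [ho.neg_one_pow] at h1
      exact (exp_neg_I_neg_one_iff _).mp (by linear_combination -h1)
  · intro h c
    rw [cond_rw]
    rcases Nat.even_or_odd c.arcs.length with he | ho
    · rw [he.neg_one_pow, one_mul]
      exact (exp_neg_I_one_iff _).mpr ((h c).1 he)
    · rw [ho.neg_one_pow]
      have h2 := (exp_neg_I_neg_one_iff (pathSum (etaFun D η) c)).mpr ((h c).2 ho)
      linear_combination -h2


lemma uniq_dep (hconn : D.underlying.Connected) (ε : ℂ)
    (v w : V → ℂ) (hv0 : ∀ x, v x ≠ 0)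
    (hvrel : ∀ x y, D.underlying.Adj x y → v y = ε * Heta D η y x * v x)
    (hwrel : ∀ x y, D.underlying.Adj x y → w y = ε * Heta D η y x * w x) :
    ∃ c : ℂ, w = c • v := by
  have : Nonempty V := hconn.nonempty
  set x₀ := Classical.arbitrary V
  refine ⟨w x₀ / v x₀, ?_⟩
  funext x
  have hp : ∀ x, v x₀ * w x = w x₀ * v x := by
    intro x
    obtain ⟨p⟩ := hconn.preconnected x₀ x
    refine propagate (fun z => v x₀ * w z = w x₀ * v z) ?_ p (by ring)
    intro a b hab h
    rw [hvrel a b hab, hwrel a b hab]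
    calc v x₀ * (ε * Heta D η b a * w a) = ε * Heta D η b a * (v x₀ * w a) := by ring
      _ = ε * Heta D η b a * (w x₀ * v a) := by rw [h]
      _ = w x₀ * (ε * Heta D η b a * v a) := by ring
  have hx := hp x
  simp only [Pi.smul_apply, smul_eq_mul]
  rw [div_mul_eq_mul_div, eq_div_iff (hv0 x₀)]
  linear_combination hx

end StmtAux3

open StmtAux StmtAux2 StmtAux3 in
/-- A weakly connected `k`-regular digraph has each of `±k` as an eigenvalue of its Hermitian
adjacency matrix `H = H_{π/2}` with multiplicity at most one; `k` is an eigenvalue iff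
`ℐ(c) ∈ 2πℤ` for every closed path, and `−k` is an eigenvalue iff the graph is in case (i)
or case (iii). -/
theorem stmt6 {V : Type} [Fintype V] [DecidableEq V] (k : ℕ) (D : Dgraph V)
    (hconn : D.underlying.Connected) (hreg : ∀ v, D.underlying.degree v = k) :
    let H := Heta D (Real.pi / 2)
    let θ := etaFun D (Real.pi / 2)
    let allInt : Prop := ∀ c : ClosedPath D.underlying, in2piZ (pathSum θ c)
    let parity : Prop := ∀ c : ClosedPath D.underlying,
      (Even c.arcs.length → in2piZ (pathSum θ c)) ∧
      (Odd c.arcs.length → in2piZhalf (pathSum θ c))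
    H.charpoly.roots.count (k : ℂ) ≤ 1 ∧
    H.charpoly.roots.count (-(k : ℂ)) ≤ 1 ∧
    ((k : ℂ) ∈ H.charpoly.roots ↔ allInt) ∧
    ((-(k : ℂ)) ∈ H.charpoly.roots ↔
      ((D.underlying.Colorable 2 ∧ allInt) ∨ (¬D.underlying.Colorable 2 ∧ parity))) := by
  intro H θ allInt parity
  have hH : H.IsHermitian := Heta_isHermitian D (Real.pi / 2)
  have heig : ∀ ε : ℂ, ε = 1 ∨ ε = -1 →
      (((ε * (k : ℂ)) ∈ H.charpoly.roots) ↔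
        (∀ c : ClosedPath D.underlying,
          (c.arcs.map (fun a => ε * Complex.exp
            (-(etaFun D (Real.pi / 2) a : ℝ) * Complex.I))).prod = 1)) := by
    intro ε hε
    have hε2 : ε * ε = 1 := by rcases hε with h | h <;> simp [h]
    rw [mem_roots_iff_eig]
    constructor
    · rintro ⟨v, hv0, hv⟩
      obtain ⟨hvne, hvrel⟩ := eigen_structure D (Real.pi / 2) k hconn hreg ε hε v hv0 hv
      intro c
      refine closed_prod v _ ?_ hvne c
      intro a
      have h1 := hvrel (arcO a) (arcT a) a.2
      rwa [Heta_arc_rev D (Real.pi / 2) a] at h1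
    · intro hcond
      exact exists_eigen D (Real.pi / 2) k hconn hreg ε hε2 hcond
  have hcount : ∀ ε : ℂ, ε = 1 ∨ ε = -1 → H.charpoly.roots.count (ε * (k : ℂ)) ≤ 1 := by
    intro ε hε
    apply herm_count_le_one H hH
    intro v w hv0 hw0 hv hw
    obtain ⟨hvne, hvrel⟩ := eigen_structure D (Real.pi / 2) k hconn hreg ε hε v hv0 hv
    obtain ⟨-, hwrel⟩ := eigen_structure D (Real.pi / 2) k hconn hreg ε hε w hw0 hw
    exact uniq_dep D (Real.pi / 2) hconn ε v w hvne hvrel hwrel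
  have hmem1 : ((k : ℂ) ∈ H.charpoly.roots ↔ allInt) := by
    have h1 := (heig 1 (Or.inl rfl)).trans (cond_one_iff D (Real.pi / 2))
    rwa [one_mul] at h1
  have hmem2 : ((-(k : ℂ)) ∈ H.charpoly.roots ↔ parity) := by
    have h1 := (heig (-1) (Or.inr rfl)).trans (cond_neg_iff D (Real.pi / 2))
    rwa [neg_one_mul] at h1
  refine ⟨?_, ?_, hmem1, ?_⟩
  · have h1 := hcount 1 (Or.inl rfl)
    rwa [one_mul] at h1
  · have h1 := hcount (-1) (Or.inr rfl)
    rwa [neg_one_mul] at h1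
  · rw [hmem2]
    by_cases hcol : D.underlying.Colorable 2
    · simp only [hcol, true_and, not_true_eq_false, false_and, or_false]
      constructor
      · intro hp c
        exact (hp c).1 (colorable_even hcol c)
      · intro ha c
        exact ⟨fun _ => ha c,
          fun hodd => absurd (colorable_even hcol c) (Nat.not_even_iff_odd.mpr hodd)⟩
    · simp only [hcol, false_and, not_false_eq_true, true_and, false_or]
end
end

section
/- Fix η ∈ ℝ. Let G be a digraph and S ⊆ V(G) a subset such that every arc in δ(S) = {(x,y) ∈ A(G) : |{x,y} ∩ S| = 1} lies in a digon. Let G' be the digraph obtained from G by replacing each digon {x,y} with x ∉ S and y ∈ S by the single arc (x,y). Then H_η(G) and H_η(G') have the same spectrum (the same characteristic polynomial). -/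
open Matrix Polynomial

noncomputable section

variable {V : Type} [Fintype V] [DecidableEq V]

lemma charpoly_units_conj (u : (Matrix V V ℂ)ˣ) (M : Matrix V V ℂ) :
    ((u : Matrix V V ℂ) * M * ((u⁻¹ : (Matrix V V ℂ)ˣ) : Matrix V V ℂ)).charpoly
      = M.charpoly := by
  have hu : (Polynomial.C.mapMatrix (u : Matrix V V ℂ) : Matrix V V ℂ[X])
      * Polynomial.C.mapMatrix ((u⁻¹ : (Matrix V V ℂ)ˣ) : Matrix V V ℂ) = 1 := by
    rw [← _root_.map_mul, Units.mul_inv, _root_.map_one]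
  have hu' : (Polynomial.C.mapMatrix ((u⁻¹ : (Matrix V V ℂ)ˣ) : Matrix V V ℂ) : Matrix V V ℂ[X])
      * Polynomial.C.mapMatrix (u : Matrix V V ℂ) = 1 := by
    rw [← _root_.map_mul, Units.inv_mul, _root_.map_one]
  have h1 : charmatrix ((u : Matrix V V ℂ) * M * ((u⁻¹ : (Matrix V V ℂ)ˣ) : Matrix V V ℂ))
      = Polynomial.C.mapMatrix (u : Matrix V V ℂ) * charmatrix M
        * Polynomial.C.mapMatrix ((u⁻¹ : (Matrix V V ℂ)ˣ) : Matrix V V ℂ) := by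
    unfold charmatrix
    rw [Matrix.mul_sub, Matrix.sub_mul, _root_.map_mul, _root_.map_mul]
    congr 1
    rw [mul_assoc, (Matrix.scalar_commute (X : ℂ[X]) (fun r => Commute.all _ _) _).eq,
      ← mul_assoc, hu, one_mul]
  unfold Matrix.charpoly
  rw [h1, det_mul, det_mul, mul_comm, ← mul_assoc, ← det_mul, hu', det_one, one_mul]


/-- If every arc of `δ(S)` lies in a digon, then replacing each digon `{x,y}` crossing `S`
(with `x ∉ S`, `y ∈ S`) by the single arc `(x,y)` preserves the `H_η`-spectrum. -/
theorem stmt7 {V : Type} [Fintype V] [DecidableEq V] (η : ℝ) (D D' : Dgraph V)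
    (S : Finset V)
    (hdelta : ∀ x y, D.Adj x y → ((x ∈ S ∧ y ∉ S) ∨ (x ∉ S ∧ y ∈ S)) → D.Adj y x)
    (hD' : ∀ u v, D'.Adj u v ↔ (D.Adj u v ∧ ¬(u ∈ S ∧ v ∉ S ∧ D.Adj v u))) :
    (Heta D η).charpoly = (Heta D' η).charpoly := by
  classical
  set e : ℂ := Complex.exp ((η : ℂ) * Complex.I) with he
  set e' : ℂ := Complex.exp (-(η : ℂ) * Complex.I) with he'
  have key : e' * e = 1 := by
    rw [he, he', ← Complex.exp_add, neg_mul, neg_add_cancel, Complex.exp_zero]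
  have key' : e * e' = 1 := by rw [mul_comm]; exact key
  set p : V → ℂ := fun x => if x ∈ S then e' else 1 with hp
  set q : V → ℂ := fun x => if x ∈ S then e else 1 with hq
  have hpq : Matrix.diagonal p * Matrix.diagonal q = 1 := by
    rw [Matrix.diagonal_mul_diagonal]
    have hfun : (fun x => p x * q x) = fun _ => (1 : ℂ) := by
      funext x; by_cases hx : x ∈ S <;> simp [hp, hq, hx, key]
    rw [hfun, Matrix.diagonal_one]
  have hqp : Matrix.diagonal q * Matrix.diagonal p = 1 := by
    rw [Matrix.diagonal_mul_diagonal]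
    have hfun : (fun x => q x * p x) = fun _ => (1 : ℂ) := by
      funext x; by_cases hx : x ∈ S <;> simp [hp, hq, hx, key']
    rw [hfun, Matrix.diagonal_one]
  set u : (Matrix V V ℂ)ˣ := ⟨Matrix.diagonal p, Matrix.diagonal q, hpq, hqp⟩ with hu
  have hmain : Heta D' η = (u : Matrix V V ℂ) * Heta D η
      * ((u⁻¹ : (Matrix V V ℂ)ˣ) : Matrix V V ℂ) := by
    have hinv : ((u⁻¹ : (Matrix V V ℂ)ˣ) : Matrix V V ℂ) = Matrix.diagonal q := rfl
    have hval : (u : Matrix V V ℂ) = Matrix.diagonal p := rfl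
    rw [hinv, hval]
    ext x y
    rw [Matrix.mul_diagonal, Matrix.diagonal_mul]
    have hE1 : Complex.exp ((η : ℂ) * Complex.I) = e := rfl
    have hE2 : Complex.exp (-((η : ℂ) * Complex.I)) = e' := by rw [he', neg_mul]
    have hE3 : Complex.exp (-(η : ℂ) * Complex.I) = e' := rfl
    by_cases hxy : D.Adj x y
    · by_cases hyx : D.Adj y x
      · -- digon
        by_cases hx : x ∈ S <;> by_cases hy : y ∈ S <;>
          simp [Heta, hD', hp, hq, hxy, hyx, hx, hy, hE1, hE2, hE3] <;>
          linear_combination -key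
      · -- single arc x→y, must be same side
        have hsame : ¬((x ∈ S ∧ y ∉ S) ∨ (x ∉ S ∧ y ∈ S)) := fun h => hyx (hdelta x y hxy h)
        have hD'xy : D'.Adj x y := by
          rw [hD']; exact ⟨hxy, fun h => hyx h.2.2⟩
        have hD'yx : ¬ D'.Adj y x := by rw [hD']; exact fun h => hyx h.1
        by_cases hx : x ∈ S <;> by_cases hy : y ∈ S
        · simp [Heta, hD'xy, hD'yx, hxy, hyx, hp, hq, hx, hy, hE1, hE2, hE3]
          linear_combination -e * key
        · exact absurd (Or.inl ⟨hx, hy⟩) hsame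
        · exact absurd (Or.inr ⟨hx, hy⟩) hsame
        · simp [Heta, hD'xy, hD'yx, hxy, hyx, hp, hq, hx, hy, hE1, hE2, hE3]
    · by_cases hyx : D.Adj y x
      · have hsame : ¬((y ∈ S ∧ x ∉ S) ∨ (y ∉ S ∧ x ∈ S)) := fun h => hxy (hdelta y x hyx h)
        have hD'yx : D'.Adj y x := by
          rw [hD']; exact ⟨hyx, fun h => hxy h.2.2⟩
        have hD'xy : ¬ D'.Adj x y := by rw [hD']; exact fun h => hxy h.1
        by_cases hx : x ∈ S <;> by_cases hy : y ∈ S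
        · simp [Heta, hD'xy, hD'yx, hxy, hyx, hp, hq, hx, hy, hE1, hE2, hE3]
          linear_combination -e' * key
        · exact absurd (Or.inr ⟨hy, hx⟩) hsame
        · exact absurd (Or.inl ⟨hy, hx⟩) hsame
        · simp [Heta, hD'xy, hD'yx, hxy, hyx, hp, hq, hx, hy, hE1, hE2, hE3]
      · have hD'xy : ¬ D'.Adj x y := by rw [hD']; exact fun h => hxy h.1
        have hD'yx : ¬ D'.Adj y x := by rw [hD']; exact fun h => hyx h.1
        simp [Heta, hD'xy, hD'yx, hxy, hyx, hE1, hE2, hE3]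
  rw [hmain, _root_.charpoly_units_conj]
end
end

section
/- Suppose n ≥ 3 and let a ∈ {0,1,…,n−1}. Let G = Y_{a,n−a} be equipped with an η-function θ, and let U_θ be its transfer matrix. Then the multiset of eigenvalues of U_θ is {1 with multiplicity n(n−1)/2 − n + 2, −1 with multiplicity n(n−1)/2 − n, together with, for each of the n−1 copies of the value −1/(n−1), the two solutions z on the unit circle of (z+z⁻¹)/2 = −1/(n−1)}. In particular, all digraphs Y_{a,n−a} (a = 0,…,n−1) have the same U_θ-spectrum as the complete graph K_n. -/
open Matrix Polynomial

noncomputable section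

variable {V : Type} [Fintype V] [DecidableEq V]

set_option linter.unusedSectionVars false

namespace Stmt8Aux

variable {n : ℕ}

lemma evalCharpoly {ι : Type} [Fintype ι] [DecidableEq ι] (M : Matrix ι ι ℂ) (r : ℂ) :
    M.charpoly.eval r = (r • (1 : Matrix ι ι ℂ) - M).det := by
  rw [Matrix.charpoly, eval_det, Matrix.matPolyEquiv_charmatrix]
  simp [Matrix.smul_one_eq_diagonal, Matrix.scalar, Pi.algebraMap_def, Algebra.algebraMap_self]

@[simp] lemma arcInv_arcInv {G : SimpleGraph V} (a : GArc G) : arcInv (arcInv a) = a := rfl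

@[simp] lemma arcT_arcInv {G : SimpleGraph V} (a : GArc G) : arcT (arcInv a) = arcO a := rfl

@[simp] lemma arcO_arcInv {G : SimpleGraph V} (a : GArc G) : arcO (arcInv a) = arcT a := rfl

lemma arcO_ne_arcT {G : SimpleGraph V} (a : GArc G) : arcO a ≠ arcT a := G.ne_of_adj a.2

lemma arcInv_ne {G : SimpleGraph V} (a : GArc G) : arcInv a ≠ a := by
  intro h
  exact arcO_ne_arcT a (congrArg arcO h).symm

variable (G : SimpleGraph (Fin n)) [DecidableRel G.Adj]

lemma S_mul_S : shiftS G * shiftS G = 1 := by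
  ext a c
  simp only [shiftS, Matrix.mul_apply, Matrix.one_apply]
  rw [Finset.sum_eq_single (arcInv c)]
  · simp; congr
  · intro b _ hb
    simp [hb]
  · simp

lemma deg_eq (hG : ∀ x y : Fin n, G.Adj x y ↔ x ≠ y) (x : Fin n) : G.degree x = n - 1 := by
  have : G.neighborFinset x = Finset.univ.erase x := by
    ext y
    simp [SimpleGraph.mem_neighborFinset, hG, ne_comm, eq_comm]
  rw [SimpleGraph.degree, this, Finset.card_erase_of_mem (Finset.mem_univ x),
    Finset.card_univ, Fintype.card_fin]

lemma card_garc (hG : ∀ x y : Fin n, G.Adj x y ↔ x ≠ y) :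
    Fintype.card (GArc G) = n * n - n := by
  have e : {p : Fin n × Fin n // p.1 = p.2} ≃ Fin n :=
    ⟨fun p => p.1.1, fun a => ⟨(a, a), rfl⟩,
      by rintro ⟨⟨x, y⟩, h⟩; cases h; rfl, fun a => rfl⟩
  calc Fintype.card (GArc G)
      = Fintype.card {p : Fin n × Fin n // ¬ p.1 = p.2} :=
        Fintype.card_congr (Equiv.subtypeEquivRight fun p => by simp [hG])
    _ = Fintype.card (Fin n × Fin n) - Fintype.card {p : Fin n × Fin n // p.1 = p.2} :=
        Fintype.card_subtype_compl _
    _ = n * n - n := by rw [Fintype.card_congr e]; simp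

def Jmat (n : ℕ) : Matrix (Fin n) (Fin n) ℂ := Matrix.of fun _ _ => 1

lemma rho_sq (hn : 3 ≤ n) :
    (((1 / Real.sqrt ((n - 1 : ℕ)) : ℝ) : ℂ)) * (((1 / Real.sqrt ((n - 1 : ℕ)) : ℝ) : ℂ))
      = ((n : ℂ) - 1)⁻¹ := by
  rw [← Complex.ofReal_mul]
  have h0 : (0:ℝ) ≤ ((n - 1 : ℕ) : ℝ) := Nat.cast_nonneg _
  have : (1 / Real.sqrt ((n - 1 : ℕ)) : ℝ) * (1 / Real.sqrt ((n - 1 : ℕ))) =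
      (((n - 1 : ℕ) : ℝ))⁻¹ := by
    rw [div_mul_div_comm, one_mul, Real.mul_self_sqrt h0, one_div]
  rw [this]
  rw [Complex.ofReal_inv]
  congr 1
  push_cast [Nat.cast_sub (by omega : 1 ≤ n)]
  ring

lemma card_target (hG : ∀ x y : Fin n, G.Adj x y ↔ x ≠ y) (x : Fin n) :
    (Finset.univ.filter fun a : GArc G => x = arcT a).card = n - 1 := by
  have e : {a : GArc G // x = arcT a} ≃ {y : Fin n // ¬ y = x} :=
    ⟨fun a => ⟨arcO a.1, fun h => arcO_ne_arcT a.1 (h.trans a.2)⟩,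
     fun y => ⟨⟨(y.1, x), (hG _ _).mpr y.2⟩, rfl⟩,
     by
      rintro ⟨⟨⟨o, t⟩, h⟩, hx⟩
      simp only [arcT] at hx
      subst hx
      rfl,
     fun y => rfl⟩
  rw [← Fintype.card_subtype, Fintype.card_congr e, Fintype.card_subtype_compl,
    Fintype.card_subtype_eq, Fintype.card_fin]

lemma K_Kh (hn : 3 ≤ n) (hG : ∀ x y : Fin n, G.Adj x y ↔ x ≠ y) :
    bdK G * (bdK G)ᴴ = 1 := by
  ext x y
  rw [Matrix.mul_apply]
  simp only [bdK, Matrix.conjTranspose_apply]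
  by_cases hxy : x = y
  · subst hxy
    have hterm : ∀ a : GArc G,
        (if x = arcT a then ((1 / Real.sqrt (G.degree (arcT a)) : ℝ) : ℂ) else 0) *
          star (if x = arcT a then ((1 / Real.sqrt (G.degree (arcT a)) : ℝ) : ℂ) else 0)
        = if x = arcT a then ((n : ℂ) - 1)⁻¹ else 0 := by
      intro a
      by_cases h : x = arcT a
      · rw [if_pos h, if_pos h, deg_eq G hG, Complex.star_def, Complex.conj_ofReal]
        exact rho_sq hn
      · simp [h]
    rw [Finset.sum_congr rfl fun a _ => hterm a, ← Finset.sum_filter, Finset.sum_const,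
      card_target G hG x, Matrix.one_apply_eq]
    rw [nsmul_eq_mul]
    have : ((n:ℂ) - 1) ≠ 0 := by
      have : ((n - 1 : ℕ) : ℂ) ≠ 0 := Nat.cast_ne_zero.mpr (by omega)
      rwa [Nat.cast_sub (by omega : 1 ≤ n), Nat.cast_one] at this
    rw [Nat.cast_sub (by omega : 1 ≤ n), Nat.cast_one]
    field_simp
  · rw [Finset.sum_eq_zero, Matrix.one_apply_ne hxy]
    intro a _
    by_cases h1 : x = arcT a
    · have h2 : ¬ y = arcT a := fun h => hxy (h1.trans h.symm)
      simp [h2]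
    · simp [h1]

lemma KS_apply (x : Fin n) (b : GArc G) :
    (bdK G * shiftS G) x b
      = if x = arcO b then ((1 / Real.sqrt (G.degree (arcO b)) : ℝ) : ℂ) else 0 := by
  rw [Matrix.mul_apply]
  rw [Finset.sum_eq_single (arcInv b)]
  · simp [bdK, shiftS, arcT_arcInv]; congr
  · intro a _ ha; simp [shiftS, ha]
  · simp

lemma KSKh (hn : 3 ≤ n) (hG : ∀ x y : Fin n, G.Adj x y ↔ x ≠ y) :
    bdK G * shiftS G * (bdK G)ᴴ = ((n : ℂ) - 1)⁻¹ • (Jmat n - 1) := by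
  ext x y
  rw [Matrix.mul_apply]
  simp only [KS_apply, Matrix.conjTranspose_apply, bdK]
  by_cases hxy : x = y
  · subst hxy
    rw [Finset.sum_eq_zero, Matrix.smul_apply, Matrix.sub_apply, Matrix.one_apply_eq]
    · simp [Jmat]
    · intro b _
      by_cases h1 : x = arcO b
      · have h2 : ¬ x = arcT b := fun h => arcO_ne_arcT b (h1.symm.trans h)
        simp [h2]
      · simp [h1]
  · rw [Finset.sum_eq_single (⟨(x, y), (hG x y).mpr hxy⟩ : GArc G)]
    · have ho : arcO (⟨(x, y), (hG x y).mpr hxy⟩ : GArc G) = x := rfl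
      have ht : arcT (⟨(x, y), (hG x y).mpr hxy⟩ : GArc G) = y := rfl
      rw [ho, ht, if_pos rfl, if_pos rfl, deg_eq G hG, deg_eq G hG,
        Complex.star_def, Complex.conj_ofReal, rho_sq hn,
        Matrix.smul_apply, Matrix.sub_apply, Matrix.one_apply_ne hxy]
      simp [Jmat]
    · rintro ⟨⟨p, q⟩, hpq⟩ _ hb
      by_cases h1 : x = p
      · by_cases h2 : y = q
        · subst h1; subst h2; exact absurd rfl hb
        · simp only [arcT] at h2 ⊢; simp [h2]
      · simp only [arcO] at h1 ⊢; simp [h1]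
    · simp

lemma KhK_off {a b : GArc G} (h : arcT a ≠ arcT b) : ((bdK G)ᴴ * bdK G) a b = 0 := by
  rw [Matrix.mul_apply]
  apply Finset.sum_eq_zero
  intro v _
  simp only [bdK, Matrix.conjTranspose_apply]
  by_cases h1 : v = arcT a
  · have h2 : ¬ v = arcT b := fun hh => h (h1.symm.trans hh)
    simp [h2]
  · simp [h1]

lemma coinC_comm (w : Fin n → ℂ) :
    coinC G * Matrix.diagonal (fun a : GArc G => w (arcT a))
      = Matrix.diagonal (fun a : GArc G => w (arcT a)) * coinC G := by
  ext a b
  rw [Matrix.mul_diagonal, Matrix.diagonal_mul]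
  by_cases h : arcT a = arcT b
  · rw [h, mul_comm]
  · have h2 : a ≠ b := fun e => h (by rw [e])
    simp [coinC, Matrix.sub_apply, Matrix.smul_apply, KhK_off G h, Matrix.one_apply_ne h2]

def sgn (a : GArc G) : ℂ := if arcO a < arcT a then 1 else -1

lemma sgn_mul_self (a : GArc G) : sgn G a * sgn G a = 1 := by
  unfold sgn; split <;> norm_num

lemma sgn_inv_mul (a : GArc G) : sgn G (arcInv a) * sgn G a = -1 := by
  have h := arcO_ne_arcT a
  unfold sgn
  rw [arcO_arcInv, arcT_arcInv]
  rcases lt_or_gt_of_ne h with h1 | h1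
  · rw [if_neg (asymm h1), if_pos h1]; norm_num
  · rw [if_pos h1, if_neg (asymm h1)]; norm_num

lemma shiftS_self (a : GArc G) : shiftS G a a = 0 :=
  if_neg (fun h => arcInv_ne a h.symm)

lemma diag_sgn_conj (l : ℂ) :
    Matrix.diagonal (sgn G) * (l • 1 - shiftS G) * Matrix.diagonal (sgn G)
      = l • 1 + shiftS G := by
  ext a b
  rw [Matrix.mul_diagonal, Matrix.diagonal_mul, Matrix.sub_apply, Matrix.add_apply,
    Matrix.smul_apply]
  by_cases hab : a = b
  · subst hab
    rw [shiftS_self, Matrix.one_apply_eq, sub_zero, add_zero, smul_eq_mul, mul_one]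
    have := sgn_mul_self G a
    linear_combination l * this
  · rw [Matrix.one_apply_ne hab, smul_zero, zero_sub, zero_add]
    by_cases h2 : a = arcInv b
    · subst h2
      rw [show shiftS G (arcInv b) b = 1 from if_pos rfl]
      have := sgn_inv_mul G b
      linear_combination -this
    · rw [show shiftS G a b = 0 from if_neg h2]
      ring

lemma det_flip (l : ℂ) :
    (l • 1 + shiftS G).det = (l • (1 : Matrix (GArc G) (GArc G) ℂ) - shiftS G).det := by
  conv_lhs => rw [← diag_sgn_conj G l]
  rw [Matrix.det_mul, Matrix.det_mul]
  have h : (Matrix.diagonal (sgn G)).det * (Matrix.diagonal (sgn G)).det = 1 := by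
    rw [← Matrix.det_mul, Matrix.diagonal_mul_diagonal,
      show (fun a => sgn G a * sgn G a) = fun _ => (1:ℂ) from funext (sgn_mul_self G),
      Matrix.diagonal_one, Matrix.det_one]
  linear_combination ((l • (1 : Matrix (GArc G) (GArc G) ℂ) - shiftS G).det) * h

lemma prod_S (l : ℂ) :
    (l • 1 + shiftS G) * (l • (1 : Matrix (GArc G) (GArc G) ℂ) - shiftS G)
      = (l ^ 2 - 1) • 1 := by
  have e1 : (l • (1 : Matrix (GArc G) (GArc G) ℂ)) * (l • 1) = (l^2) • 1 := by
    rw [smul_mul_assoc, one_mul, smul_smul, ← sq]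
  have e2 : (l • (1 : Matrix (GArc G) (GArc G) ℂ)) * shiftS G = l • shiftS G := by
    rw [smul_mul_assoc, one_mul]
  have e3 : shiftS G * (l • (1 : Matrix (GArc G) (GArc G) ℂ)) = l • shiftS G := by
    rw [mul_smul_comm, mul_one]
  rw [mul_sub, add_mul, add_mul, e1, e2, e3, S_mul_S, sub_smul, one_smul]
  abel

lemma det_plus_S {E : ℕ} (hcard : Fintype.card (GArc G) = 2 * E) (l : ℂ) :
    (l • 1 + shiftS G).det = (l ^ 2 - 1) ^ E := by
  have hq : ∀ t : ℂ, ((-(shiftS G)).charpoly).eval t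
      = (t • 1 + shiftS G).det := by
    intro t; rw [evalCharpoly, sub_neg_eq_add]
  have hsq : (-(shiftS G)).charpoly ^ 2 = ((X ^ 2 - 1 : ℂ[X]) ^ E) ^ 2 := by
    apply Polynomial.funext; intro t
    rw [eval_pow, hq, eval_pow, eval_pow, eval_sub, eval_pow, eval_X, eval_one]
    have h1 : (t • 1 + shiftS G).det * (t • (1 : Matrix (GArc G) (GArc G) ℂ) - shiftS G).det
        = (t ^ 2 - 1) ^ (2 * E) := by
      rw [← Matrix.det_mul, prod_S, Matrix.det_smul, Matrix.det_one, mul_one, hcard]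
    have h2 : (t • 1 + shiftS G).det * (t • 1 + shiftS G).det
        = (t • 1 + shiftS G).det * (t • (1 : Matrix (GArc G) (GArc G) ℂ) - shiftS G).det := by
      rw [det_flip G t]
    rw [sq, h2, h1]
    ring
  have hmon1 : (-(shiftS G)).charpoly.Monic := Matrix.charpoly_monic _
  have hmon2 : ((X ^ 2 - 1 : ℂ[X]) ^ E).Monic := by
    apply Polynomial.Monic.pow
    have := Polynomial.monic_X_pow_sub_C (1 : ℂ) (two_ne_zero)
    simpa using this
  have hfac : ((-(shiftS G)).charpoly - (X ^ 2 - 1) ^ E)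
      * ((-(shiftS G)).charpoly + (X ^ 2 - 1) ^ E) = 0 := by
    linear_combination hsq
  rcases mul_eq_zero.mp hfac with h | h
  · have hpq : (-(shiftS G)).charpoly = (X ^ 2 - 1) ^ E := sub_eq_zero.mp h
    rw [← hq, hpq]
    simp [eval_pow]
  · exfalso
    have hpq := eq_neg_of_add_eq_zero_left h
    have : (1 : ℂ) = -1 := by
      calc (1 : ℂ) = ((-(shiftS G)).charpoly).leadingCoeff := hmon1.leadingCoeff.symm
        _ = (-((X ^ 2 - 1 : ℂ[X]) ^ E)).leadingCoeff := by rw [hpq]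
        _ = -1 := by rw [Polynomial.leadingCoeff_neg, hmon2.leadingCoeff]
    norm_num at this

lemma charpoly_transfer (θ : GArc G → ℝ) (g : Fin n → ℝ)
    (hθ : ∀ b : GArc G, θ b = g (arcT b) - g (arcO b)) :
    (transferU G θ).charpoly = (groverU G).charpoly := by
  set w : GArc G → ℂ := fun a => Complex.exp (-(g (arcT a) : ℂ) * Complex.I) with hw
  set w' : GArc G → ℂ := fun a => Complex.exp ((g (arcT a) : ℂ) * Complex.I) with hw'
  have hWW' : Matrix.diagonal w * Matrix.diagonal w' = 1 := by
    rw [Matrix.diagonal_mul_diagonal]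
    have he : (fun i => w i * w' i) = fun _ => (1 : ℂ) := by
      funext i
      rw [hw, hw']
      dsimp only
      rw [← Complex.exp_add, show -(g (arcT i) : ℂ) * Complex.I + (g (arcT i) : ℂ) * Complex.I
        = 0 by ring, Complex.exp_zero]
    rw [he, Matrix.diagonal_one]
  have hcomm : coinC G * Matrix.diagonal w' = Matrix.diagonal w' * coinC G :=
    coinC_comm G (fun x : Fin n => Complex.exp ((g x : ℂ) * Complex.I))
  have hshift : shiftStheta G θ = Matrix.diagonal w * shiftS G * Matrix.diagonal w' := by
    ext a b
    rw [Matrix.mul_diagonal, Matrix.diagonal_mul]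
    unfold shiftStheta shiftS
    by_cases h : a = arcInv b
    · rw [if_pos h, if_pos h, hθ b]
      subst h
      rw [hw, hw']
      dsimp only
      rw [arcT_arcInv, mul_one, ← Complex.exp_add]
      congr 1
      push_cast
      ring
    · rw [if_neg h, if_neg h]
      ring
  have hkey : transferU G θ = Matrix.diagonal w * groverU G * Matrix.diagonal w' := by
    unfold transferU groverU
    rw [hshift, mul_assoc (Matrix.diagonal w * shiftS G) (Matrix.diagonal w') (coinC G),
      ← hcomm, ← mul_assoc, mul_assoc (Matrix.diagonal w) (shiftS G) (coinC G)]
  apply Polynomial.funext; intro r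
  rw [evalCharpoly, evalCharpoly, hkey]
  have hconj : r • 1 - Matrix.diagonal w * groverU G * Matrix.diagonal w'
      = Matrix.diagonal w * (r • (1 : Matrix (GArc G) (GArc G) ℂ) - groverU G)
          * Matrix.diagonal w' := by
    rw [mul_sub, sub_mul]
    congr 1
    rw [mul_smul_comm, mul_one, smul_mul_assoc, hWW']
  rw [hconj, Matrix.det_mul, Matrix.det_mul]
  have hdet : (Matrix.diagonal w).det * (Matrix.diagonal w').det = 1 := by
    rw [← Matrix.det_mul, hWW', Matrix.det_one]
  linear_combination ((r • (1 : Matrix (GArc G) (GArc G) ℂ) - groverU G).det) * hdet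

lemma det_aone_add_bJ (hn : 3 ≤ n) (α β : ℂ) :
    (α • (1 : Matrix (Fin n) (Fin n) ℂ) + β • Jmat n).det = α ^ (n - 1) * (α + n * β) := by
  by_cases hα : α = 0
  · subst hα
    have hJ : (Jmat n).det = 0 := by
      apply Matrix.det_zero_of_row_eq (i := ⟨0, by omega⟩) (j := ⟨1, by omega⟩)
      · simp [Fin.ext_iff]
      · rfl
    rw [zero_smul, zero_add, Matrix.det_smul, hJ, mul_zero, zero_pow (by omega : n - 1 ≠ 0),
      zero_mul]
  · have key : α • (1 : Matrix (Fin n) (Fin n) ℂ) + β • Jmat n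
        = α • (1 + Matrix.replicateCol Unit (fun _ => β / α) * Matrix.replicateRow Unit (fun _ => (1 : ℂ))) := by
      rw [smul_add]
      congr 1
      ext i j
      rw [Matrix.smul_apply, Matrix.smul_apply, Matrix.mul_apply]
      simp only [Matrix.replicateCol_apply, Matrix.replicateRow_apply, mul_one, Finset.sum_const,
        Finset.card_univ, Fintype.card_unit, one_smul, Jmat, Matrix.of_apply, smul_eq_mul]
      field_simp
    rw [key, Matrix.det_smul, Matrix.det_one_add_mul_comm, Fintype.card_fin, Matrix.det_unique,
      Matrix.add_apply, Matrix.one_apply_eq, Matrix.mul_apply]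
    simp only [Matrix.replicateRow_apply, Matrix.replicateCol_apply, one_mul, Finset.sum_const, Finset.card_univ,
      Fintype.card_fin, nsmul_eq_mul]
    have hpow : α ^ n = α ^ (n - 1) * α := by
      rw [← pow_succ]; congr 1; omega
    rw [hpow]
    field_simp

lemma hcard_garc (hn : 3 ≤ n) (hG : ∀ x y : Fin n, G.Adj x y ↔ x ≠ y) {N : ℕ}
    (hN : n * (n - 1) / 2 = N + n) : Fintype.card (GArc G) = 2 * (N + n) := by
  have h2 : 2 ∣ n * (n - 1) := by
    rcases Nat.even_or_odd n with he | ho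
    · exact he.two_dvd.mul_right _
    · exact ((Nat.Odd.sub_odd ho odd_one).two_dvd).mul_left _
  have h3 : 2 * (n * (n - 1) / 2) = n * (n - 1) := Nat.mul_div_cancel' h2
  have h4 : n * (n - 1) = n * n - n := by
    obtain ⟨m, rfl⟩ : ∃ m, n = m + 1 := ⟨n - 1, by omega⟩
    simp only [Nat.add_sub_cancel]
    rw [Nat.mul_succ, Nat.add_sub_cancel]
  rw [card_garc G hG, ← h4, ← h3, hN]

lemma det_main (hn : 3 ≤ n) (hG : ∀ x y : Fin n, G.Adj x y ↔ x ≠ y) {N : ℕ}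
    (hN : n * (n - 1) / 2 = N + n) (l : ℂ) (h1 : l - 1 ≠ 0) (h2 : l + 1 ≠ 0) :
    (l • 1 - groverU G).det
      = (l - 1) ^ (N + 2) * (l + 1) ^ N
        * (l ^ 2 + 2 / ((n : ℂ) - 1) * l + 1) ^ (n - 1) := by
  have hc : ((n : ℂ) - 1) ≠ 0 := by
    have : ((n - 1 : ℕ) : ℂ) ≠ 0 := Nat.cast_ne_zero.mpr (by omega)
    rwa [Nat.cast_sub (by omega : 1 ≤ n), Nat.cast_one] at this
  have hfac : l ^ 2 - 1 = (l - 1) * (l + 1) := by ring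
  have hw : (l - 1) * (l + 1) ≠ 0 := mul_ne_zero h1 h2
  have hl2 : l ^ 2 - 1 ≠ 0 := by rw [hfac]; exact hw
  have hU : l • 1 - groverU G
      = (l • 1 + shiftS G) + ((-2 : ℂ) • (shiftS G * (bdK G)ᴴ)) * bdK G := by
    unfold groverU coinC
    rw [show shiftS G * ((2 : ℂ) • ((bdK G)ᴴ * bdK G) - 1)
        = (2 : ℂ) • (shiftS G * ((bdK G)ᴴ * bdK G)) - shiftS G by
      rw [Matrix.mul_sub, Matrix.mul_one, Matrix.mul_smul]]
    rw [show ((-2 : ℂ) • (shiftS G * (bdK G)ᴴ)) * bdK G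
        = (-2 : ℂ) • (shiftS G * ((bdK G)ᴴ * bdK G)) by
      rw [Matrix.smul_mul, Matrix.mul_assoc]]
    module
  have hMMinv : (l • 1 + shiftS G) * ((l ^ 2 - 1)⁻¹ • (l • 1 - shiftS G)) = 1 := by
    rw [Matrix.mul_smul, prod_S, smul_smul, inv_mul_cancel₀ hl2, one_smul]
  have key : l • 1 - groverU G
      = (l • 1 + shiftS G)
        * (1 + ((l ^ 2 - 1)⁻¹ • (l • (1 : Matrix (GArc G) (GArc G) ℂ) - shiftS G))
            * ((-2 : ℂ) • (shiftS G * (bdK G)ᴴ)) * bdK G) := by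
    rw [Matrix.mul_add, Matrix.mul_one, ← Matrix.mul_assoc, ← Matrix.mul_assoc, hMMinv,
      Matrix.one_mul]
    exact hU
  rw [key, Matrix.det_mul, Matrix.det_one_add_mul_comm]
  have e0 : (l • (1 : Matrix (GArc G) (GArc G) ℂ) - shiftS G) * (shiftS G * (bdK G)ᴴ)
      = l • (shiftS G * (bdK G)ᴴ) - (bdK G)ᴴ := by
    rw [Matrix.sub_mul, Matrix.smul_mul, Matrix.one_mul, ← Matrix.mul_assoc, S_mul_S,
      Matrix.one_mul]
  have hKMB : bdK G * (((l ^ 2 - 1)⁻¹ • (l • (1 : Matrix (GArc G) (GArc G) ℂ) - shiftS G))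
      * ((-2 : ℂ) • (shiftS G * (bdK G)ᴴ)))
      = ((l ^ 2 - 1)⁻¹ * (-2)) • (l • (((n : ℂ) - 1)⁻¹ • (Jmat n - 1)) - 1) := by
    rw [show ((l ^ 2 - 1)⁻¹ • (l • (1 : Matrix (GArc G) (GArc G) ℂ) - shiftS G))
        * ((-2 : ℂ) • (shiftS G * (bdK G)ᴴ))
        = ((l ^ 2 - 1)⁻¹ * (-2)) • ((l • (1 : Matrix (GArc G) (GArc G) ℂ) - shiftS G)
            * (shiftS G * (bdK G)ᴴ)) by
      rw [Matrix.smul_mul, Matrix.mul_smul, smul_smul]]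
    rw [Matrix.mul_smul, e0, Matrix.mul_sub, Matrix.mul_smul, ← Matrix.mul_assoc,
      KSKh G hn hG, K_Kh G hn hG]
  rw [hKMB]
  rw [show (1 : Matrix (Fin n) (Fin n) ℂ)
        + ((l ^ 2 - 1)⁻¹ * (-2)) • (l • (((n : ℂ) - 1)⁻¹ • (Jmat n - 1)) - 1)
      = (1 + 2 * (l ^ 2 - 1)⁻¹ + 2 * (l ^ 2 - 1)⁻¹ * l * ((n : ℂ) - 1)⁻¹)
          • (1 : Matrix (Fin n) (Fin n) ℂ)
        + (-(2 * (l ^ 2 - 1)⁻¹ * l * ((n : ℂ) - 1)⁻¹)) • Jmat n by module]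
  rw [det_aone_add_bJ hn, det_plus_S G (hcard_garc G hn hG hN)]
  have hβ : 1 + 2 * (l ^ 2 - 1)⁻¹ + 2 * (l ^ 2 - 1)⁻¹ * l * ((n : ℂ) - 1)⁻¹
      + (n : ℂ) * (-(2 * (l ^ 2 - 1)⁻¹ * l * ((n : ℂ) - 1)⁻¹))
      = (l - 1) ^ 2 * ((l - 1) * (l + 1))⁻¹ := by
    rw [hfac]; field_simp; ring
  have hα : 1 + 2 * (l ^ 2 - 1)⁻¹ + 2 * (l ^ 2 - 1)⁻¹ * l * ((n : ℂ) - 1)⁻¹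
      = (l ^ 2 + 2 / ((n : ℂ) - 1) * l + 1) * ((l - 1) * (l + 1))⁻¹ := by
    rw [hfac]; field_simp; ring
  rw [hβ, hα, hfac]
  rw [show ((l - 1) * (l + 1)) ^ (N + n) = ((l - 1) * (l + 1)) ^ N * ((l - 1) * (l + 1)) ^ (n - 1)
      * ((l - 1) * (l + 1)) by rw [← pow_add, ← pow_succ]; congr 1; omega]
  rw [mul_pow (l ^ 2 + 2 / ((n : ℂ) - 1) * l + 1) (((l - 1) * (l + 1))⁻¹),
    inv_pow ((l - 1) * (l + 1)) (n - 1), mul_pow (l - 1) (l + 1) N]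
  have hA : ((l - 1) * (l + 1)) ^ (n - 1) ≠ 0 := pow_ne_zero _ hw
  field_simp
  ring

lemma charpoly_eq (hn : 3 ≤ n) (hG : ∀ x y : Fin n, G.Adj x y ↔ x ≠ y) {N : ℕ}
    (hN : n * (n - 1) / 2 = N + n) (θ : GArc G → ℝ) (g : Fin n → ℝ)
    (hθ : ∀ b : GArc G, θ b = g (arcT b) - g (arcO b)) (r1 r2 : ℂ)
    (hsum : r1 + r2 = -(2 / ((n : ℂ) - 1))) (hprod : r1 * r2 = 1) :
    (transferU G θ).charpoly
      = (X - C (1 : ℂ)) ^ (N + 2) * (X - C (-1 : ℂ)) ^ N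
        * ((X - C r1) * (X - C r2)) ^ (n - 1) := by
  rw [charpoly_transfer G θ g hθ]
  apply Polynomial.eq_of_infinite_eval_eq
  have hfin : ({1, -1} : Set ℂ).Finite := (Set.finite_singleton (-1:ℂ)).insert 1
  apply Set.Infinite.mono _ hfin.infinite_compl
  intro l hl
  simp only [Set.mem_compl_iff, Set.mem_insert_iff, Set.mem_singleton_iff, not_or] at hl
  obtain ⟨hl1, hl2⟩ := hl
  have h1 : l - 1 ≠ 0 := sub_ne_zero.mpr hl1
  have h2 : l + 1 ≠ 0 := by
    intro h
    exact hl2 (by rw [add_eq_zero_iff_eq_neg] at h; exact h)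
  simp only [Set.mem_setOf_eq]
  rw [evalCharpoly, det_main G hn hG hN l h1 h2]
  simp only [eval_mul, eval_pow, eval_sub, eval_X, eval_C]
  have hq : (l - r1) * (l - r2) = l ^ 2 + 2 / ((n : ℂ) - 1) * l + 1 := by
    linear_combination (-l) * hsum + hprod
  rw [hq, sub_neg_eq_add]

lemma bind_replicate {α : Type} [DecidableEq α] (k : ℕ) (μ : α) (f : α → Multiset α) :
    (Multiset.replicate k μ).bind f = k • f μ := by
  induction k with
  | zero => simp
  | succ m ih =>
    rw [Multiset.replicate_succ, Multiset.cons_bind, ih, succ_nsmul, add_comm]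

end Stmt8Aux

section Ylemmas
open Stmt8Aux

variable {n : ℕ}

lemma Yadj_iff (a : ℕ) (x y : Fin n) :
    (Ydigraph n a).Adj x y ↔ x ≠ y ∧
      ((x.val < a ∧ y.val < a) ∨ (a ≤ x.val ∧ a ≤ y.val) ∨ (x.val < a ∧ a ≤ y.val)) := by
  simp [Dgraph.Adj, Ydigraph]

lemma underlying_adj (a : ℕ) (x y : Fin n) :
    (Ydigraph n a).underlying.Adj x y ↔ x ≠ y := by
  constructor
  · rintro (h | h)
    · exact (Yadj_iff a x y).mp h |>.1
    · exact ((Yadj_iff a y x).mp h |>.1).symm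
  · intro hne
    by_cases hx : x.val < a <;> by_cases hy : y.val < a
    · exact Or.inl ((Yadj_iff a x y).mpr ⟨hne, Or.inl ⟨hx, hy⟩⟩)
    · exact Or.inl ((Yadj_iff a x y).mpr ⟨hne, Or.inr (Or.inr ⟨hx, le_of_not_gt hy⟩)⟩)
    · exact Or.inr ((Yadj_iff a y x).mpr ⟨hne.symm, Or.inr (Or.inr ⟨hy, le_of_not_gt hx⟩)⟩)
    · exact Or.inl ((Yadj_iff a x y).mpr
        ⟨hne, Or.inr (Or.inl ⟨le_of_not_gt hx, le_of_not_gt hy⟩)⟩)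

lemma etaY (a : ℕ) (η : ℝ) (b : GArc (Ydigraph n a).underlying) :
    etaFun (Ydigraph n a) η b
      = (fun x : Fin n => if x.val < a then 0 else η) (arcT b)
        - (fun x : Fin n => if x.val < a then 0 else η) (arcO b) := by
  have hne : arcO b ≠ arcT b := arcO_ne_arcT b
  unfold etaFun
  dsimp only
  by_cases ho : (arcO b).val < a <;> by_cases ht : (arcT b).val < a
  · rw [if_pos ((Yadj_iff a _ _).mpr ⟨hne, Or.inl ⟨ho, ht⟩⟩),
      if_pos ((Yadj_iff a _ _).mpr ⟨hne.symm, Or.inl ⟨ht, ho⟩⟩), if_pos ho, if_pos ht]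
    ring
  · rw [if_pos ((Yadj_iff a _ _).mpr ⟨hne, Or.inr (Or.inr ⟨ho, le_of_not_gt ht⟩)⟩)]
    rw [if_neg (fun h => by
      rcases ((Yadj_iff a _ _).mp h).2 with ⟨h1, h2⟩ | ⟨h1, h2⟩ | ⟨h1, h2⟩ <;> omega)]
    rw [if_neg ht, if_pos ho]
    ring
  · rw [if_neg (fun h => by
      rcases ((Yadj_iff a _ _).mp h).2 with ⟨h1, h2⟩ | ⟨h1, h2⟩ | ⟨h1, h2⟩ <;> omega)]
    rw [if_pos ht, if_neg ho]
    ring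
  · rw [if_pos ((Yadj_iff a _ _).mpr ⟨hne, Or.inr (Or.inl ⟨le_of_not_gt ho, le_of_not_gt ht⟩)⟩),
      if_pos ((Yadj_iff a _ _).mpr ⟨hne.symm, Or.inr (Or.inl ⟨le_of_not_gt ht,
        le_of_not_gt ho⟩)⟩), if_neg ho, if_neg ht]
    ring

end Ylemmas

/-- For `n ≥ 3` and `a ∈ {0,…,n−1}`, the spectrum of the transfer matrix of `Y_{a,n−a}` is
`{1^{(n(n−1)/2−n+2)}, (−1)^{(n(n−1)/2−n)}, φ⁻¹((−1/(n−1))^{(n−1)})}`; in particular the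
digraphs `Y_{a,n−a}` are `U_θ`-cospectral with `K_n = Y_{n,0}`. -/
theorem stmt8 (n : ℕ) (hn : 3 ≤ n) (a : ℕ) (ha : a ≤ n - 1) (η : ℝ) :
    (transferU (Ydigraph n a).underlying (etaFun (Ydigraph n a) η)).charpoly.roots =
      Multiset.replicate (n * (n - 1) / 2 - n + 2) 1
        + Multiset.replicate (n * (n - 1) / 2 - n) (-1)
        + (Multiset.replicate (n - 1) (-1 / ((n : ℂ) - 1))).bind phiInv ∧
    (transferU (Ydigraph n a).underlying (etaFun (Ydigraph n a) η)).charpoly =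
      (transferU (Ydigraph n n).underlying (etaFun (Ydigraph n n) η)).charpoly := by
  have hge : n ≤ n * (n - 1) / 2 := by
    have h1 : n * 2 ≤ n * (n - 1) := Nat.mul_le_mul_left n (by omega)
    exact (Nat.le_div_iff_mul_le (by norm_num)).mpr h1
  obtain ⟨N, hN⟩ : ∃ N, n * (n - 1) / 2 = N + n := ⟨n * (n - 1) / 2 - n, by omega⟩
  have hc : ((n : ℂ) - 1) ≠ 0 := by
    have : ((n - 1 : ℕ) : ℂ) ≠ 0 := Nat.cast_ne_zero.mpr (by omega)
    rwa [Nat.cast_sub (by omega : 1 ≤ n), Nat.cast_one] at this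
  have hn3 : (3 : ℝ) ≤ (n : ℝ) := by exact_mod_cast hn
  set s0 : ℝ := Real.sqrt (((n : ℝ) - 1) ^ 2 - 1) with hs0
  have hs0pos : 0 < s0 := Real.sqrt_pos.mpr (by nlinarith)
  set r1 : ℂ := (-1 + Complex.I * s0) / ((n : ℂ) - 1) with hr1
  set r2 : ℂ := (-1 - Complex.I * s0) / ((n : ℂ) - 1) with hr2
  have hs0sq : ((s0 : ℝ) : ℂ) ^ 2 = ((n : ℂ) - 1) ^ 2 - 1 := by
    rw [← Complex.ofReal_pow, hs0, Real.sq_sqrt (by nlinarith : (0:ℝ) ≤ ((n : ℝ) - 1) ^ 2 - 1)]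
    push_cast
    ring
  have hkey : (Complex.I * (s0 : ℂ)) ^ 2 = 1 - ((n : ℂ) - 1) ^ 2 := by
    rw [mul_pow, Complex.I_sq, hs0sq]; ring
  have hsum : r1 + r2 = -(2 / ((n : ℂ) - 1)) := by
    rw [hr1, hr2]; field_simp; ring
  have hprod : r1 * r2 = 1 := by
    rw [hr1, hr2, div_mul_div_comm,
      show (-1 + Complex.I * s0) * (-1 - Complex.I * s0) = ((n : ℂ) - 1) ^ 2 from by
        linear_combination -hkey,
      sq, div_self (mul_ne_zero hc hc)]
  have hne12 : r1 ≠ r2 := by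
    intro h
    rw [hr1, hr2, div_eq_div_iff hc hc] at h
    have h2 : (-1 + Complex.I * s0 : ℂ) = -1 - Complex.I * s0 := mul_right_cancel₀ hc h
    have h3 : Complex.I * (s0 : ℂ) = 0 := by linear_combination h2 / 2
    exact (mul_ne_zero Complex.I_ne_zero (Complex.ofReal_ne_zero.mpr hs0pos.ne')) h3
  have hcp : ∀ m : ℕ,
      (transferU (Ydigraph n m).underlying (etaFun (Ydigraph n m) η)).charpoly
        = (X - C (1 : ℂ)) ^ (N + 2) * (X - C (-1 : ℂ)) ^ N
          * ((X - C r1) * (X - C r2)) ^ (n - 1) := fun m =>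
    Stmt8Aux.charpoly_eq (Ydigraph n m).underlying hn (underlying_adj m) hN
      (etaFun (Ydigraph n m) η) (fun x => if x.val < m then 0 else η) (etaY m η)
      r1 r2 hsum hprod
  have hp1 : ((X - C (1 : ℂ)) ^ (N + 2)).Monic := (monic_X_sub_C _).pow _
  have hp2 : ((X - C (-1 : ℂ)) ^ N).Monic := (monic_X_sub_C _).pow _
  have hp3m : ((X - C r1) * (X - C r2)).Monic := (monic_X_sub_C _).mul (monic_X_sub_C _)
  have hp3 : (((X - C r1) * (X - C r2)) ^ (n - 1)).Monic := hp3m.pow _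
  constructor
  · rw [hcp a]
    rw [Polynomial.roots_mul (((hp1.mul hp2).mul hp3).ne_zero),
      Polynomial.roots_mul ((hp1.mul hp2).ne_zero),
      Polynomial.roots_pow, Polynomial.roots_pow, Polynomial.roots_pow,
      Polynomial.roots_mul (hp3m.ne_zero)]
    simp only [Polynomial.roots_X_sub_C]
    have hphi : phiInv (-1 / ((n : ℂ) - 1)) = {r1} + {r2} := by
      have hpoly : (X ^ 2 - C (2 * (-1 / ((n : ℂ) - 1))) * X + 1 : ℂ[X])
          = (X - C r1) * (X - C r2) := by
        rw [show (2 * (-1 / ((n : ℂ) - 1))) = r1 + r2 from by rw [hsum]; ring,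
          show (1 : ℂ[X]) = C (r1 * r2) from by rw [hprod, C_1],
          C_add, C_mul]
        ring
      rw [phiInv, hpoly, Polynomial.roots_mul (hp3m.ne_zero), Polynomial.roots_X_sub_C,
        Polynomial.roots_X_sub_C]
      apply Multiset.dedup_eq_self.mpr
      rw [Multiset.singleton_add]
      exact Multiset.nodup_cons.mpr ⟨by simp [hne12], Multiset.nodup_singleton _⟩
    rw [Stmt8Aux.bind_replicate, hphi, Multiset.nsmul_singleton, Multiset.nsmul_singleton,
      show n * (n - 1) / 2 - n = N from by omega]
  · rw [hcp a, hcp n]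
end
end

section
/- Let G be a digraph (with connected underlying graph) equipped with an η-function θ. For ε ∈ {+,−}, the support of the first power of the transfer matrix satisfies U_θ^{(1,ε)} = U^ε, where U = U(G^±) is the Grover transfer matrix of the underlying graph. Moreover, if G is k-regular with k ≥ 3, then U_θ^{(1,+)} = k·S·K*K − S, where S = S(G^±) and K = K(G^±). -/
open Matrix Polynomial

noncomputable section

variable {V : Type} [Fintype V] [DecidableEq V]

section MyAux

lemma arcInv_invol {G : SimpleGraph V} (a : GArc G) : arcInv (arcInv a) = a := rfl

lemma arcInv_eq_iff {G : SimpleGraph V} {a b : GArc G} : a = arcInv b ↔ arcInv a = b := by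
  constructor
  · rintro rfl; rfl
  · rintro rfl; rfl

lemma arcO_arcInv {G : SimpleGraph V} (b : GArc G) : arcO (arcInv b) = arcT b := rfl

lemma arcT_arcInv {G : SimpleGraph V} (b : GArc G) : arcT (arcInv b) = arcO b := rfl

lemma etaFun_arcInv (D : Dgraph V) (η : ℝ) (a : GArc D.underlying) :
    etaFun D η (arcInv a) = - etaFun D η a := by
  unfold etaFun
  rw [arcO_arcInv, arcT_arcInv]
  by_cases h1 : D.Adj (arcO a) (arcT a) <;> by_cases h2 : D.Adj (arcT a) (arcO a) <;>
    simp only [h1, h2, if_true, if_false, neg_zero, neg_neg]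
  exact absurd a.2 (by intro h; change D.Adj (arcO a) (arcT a) ∨ D.Adj (arcT a) (arcO a) at h; rcases h with h | h; exacts [h1 h, h2 h])

lemma Dtheta_mul_shiftStheta (D : Dgraph V) (η : ℝ) :
    Dtheta D.underlying (etaFun D η) * shiftStheta D.underlying (etaFun D η)
      = shiftS D.underlying := by
  ext a b
  rw [Dtheta, Matrix.diagonal_mul]
  unfold shiftStheta shiftS
  by_cases h : a = arcInv b
  · rw [if_pos h, if_pos h]
    subst h
    rw [← Complex.exp_add]
    have hθ : etaFun D η (arcInv b) = - etaFun D η b := etaFun_arcInv D η b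
    rw [show ((etaFun D η (arcInv b) : ℂ) * Complex.I + (etaFun D η b : ℂ) * Complex.I) = 0 by
      rw [hθ]; push_cast; ring]
    exact Complex.exp_zero
  · simp [h]

lemma Dtheta_mul_transferU (D : Dgraph V) (η : ℝ) :
    Dtheta D.underlying (etaFun D η) * transferU D.underlying (etaFun D η)
      = groverU D.underlying := by
  rw [transferU, ← Matrix.mul_assoc, Dtheta_mul_shiftStheta, groverU]

lemma KHK_entry (G : SimpleGraph V) [DecidableRel G.Adj] (c b : GArc G) :
    ((bdK G)ᴴ * bdK G) c b
      = if arcT c = arcT b then (((G.degree (arcT b) : ℝ)⁻¹ : ℝ) : ℂ) else 0 := by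
  classical
  rw [Matrix.mul_apply]
  rw [Finset.sum_eq_single (arcT b)]
  · rw [Matrix.conjTranspose_apply]
    unfold bdK
    by_cases h : arcT c = arcT b
    · rw [if_pos h.symm, if_pos rfl, if_pos h, h]
      rw [Complex.star_def, Complex.conj_ofReal, ← Complex.ofReal_mul]
      congr 1
      rw [div_mul_div_comm, one_mul, Real.mul_self_sqrt (by positivity), one_div]
    · rw [if_neg (fun hh => h hh.symm), star_zero, zero_mul, if_neg h]
  · intro v _ hv
    rw [Matrix.conjTranspose_apply]
    unfold bdK
    rw [if_neg hv, mul_zero]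
  · intro h; exact absurd (Finset.mem_univ _) h

lemma shift_mul_entry (G : SimpleGraph V) [DecidableRel G.Adj] (M : Matrix (GArc G) (GArc G) ℂ) (a b : GArc G) :
    (shiftS G * M) a b = M (arcInv a) b := by
  rw [Matrix.mul_apply]
  rw [Finset.sum_eq_single (arcInv a)]
  · rw [shiftS, arcInv_invol, if_pos rfl, one_mul]
  · intro c _ hc
    rw [shiftS, if_neg, zero_mul]
    intro h; exact hc (arcInv_eq_iff.mp h).symm
  · intro h; exact absurd (Finset.mem_univ _) h

lemma groverU_entry (G : SimpleGraph V) [DecidableRel G.Adj] (a b : GArc G) :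
    groverU G a b = (if arcO a = arcT b then ((2 * (G.degree (arcT b) : ℝ)⁻¹ : ℝ) : ℂ) else 0)
      - (if a = arcInv b then 1 else 0) := by
  rw [groverU, shift_mul_entry]
  rw [coinC, Matrix.sub_apply, Matrix.smul_apply, KHK_entry, arcT_arcInv, Matrix.one_apply]
  congr 1
  · by_cases h : arcO a = arcT b <;> simp [h] <;> push_cast <;> ring
  · simp only [← arcInv_eq_iff (a := a) (b := b)]

lemma SKK_entry (G : SimpleGraph V) [DecidableRel G.Adj] (a b : GArc G) :
    (shiftS G * (bdK G)ᴴ * bdK G) a b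
      = if arcO a = arcT b then (((G.degree (arcT b) : ℝ)⁻¹ : ℝ) : ℂ) else 0 := by
  rw [Matrix.mul_assoc, shift_mul_entry, KHK_entry, arcT_arcInv]

end MyAux

/-- The supports of the first power of the transfer matrix coincide with the corresponding
supports of the Grover transfer matrix of the underlying graph; in the `k`-regular case
(`k ≥ 3`), `U_θ^{(1,+)} = k·S·K*K − S`. -/
theorem stmt10 {V : Type} [Fintype V] [DecidableEq V] (η : ℝ) (D : Dgraph V)
    (hconn : D.underlying.Connected) (k : ℕ) :
    suppPos (Dtheta D.underlying (etaFun D η) * transferU D.underlying (etaFun D η))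
        = suppPos (groverU D.underlying) ∧
    suppNeg (Dtheta D.underlying (etaFun D η) * transferU D.underlying (etaFun D η))
        = suppNeg (groverU D.underlying) ∧
    (3 ≤ k → (∀ v, D.underlying.degree v = k) →
      suppPos (Dtheta D.underlying (etaFun D η) * transferU D.underlying (etaFun D η))
        = (k : ℂ) • (shiftS D.underlying * (bdK D.underlying)ᴴ * bdK D.underlying)
            - shiftS D.underlying) := by
  have hmain := Dtheta_mul_transferU D η
  refine ⟨by rw [hmain], by rw [hmain], fun hk hreg => ?_⟩
  rw [hmain]
  have hk0 : (0 : ℝ) < (k : ℝ) := by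
    have : (3 : ℝ) ≤ (k : ℝ) := by exact_mod_cast hk
    linarith
  ext a b
  rw [Matrix.sub_apply, Matrix.smul_apply, SKK_entry, hreg]
  rw [suppPos]
  rw [groverU_entry, hreg]
  simp only [shiftS]
  have h3 : (3:ℝ) ≤ (k:ℝ) := by exact_mod_cast hk
  by_cases h1 : a = arcInv b
  · simp only [h1, arcO_arcInv, eq_self_iff_true, if_true]
    rw [if_neg, smul_eq_mul, ← Complex.ofReal_natCast, ← Complex.ofReal_mul,
      mul_inv_cancel₀ (ne_of_gt hk0)]
    · norm_num
    · simp only [Complex.sub_re, Complex.ofReal_re, Complex.one_re]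
      push_neg
      have hinv : (k:ℝ)⁻¹ ≤ 3⁻¹ := by
        apply inv_anti₀ (by norm_num) h3
      linarith
  · simp only [if_neg h1, sub_zero]
    by_cases h2 : arcO a = arcT b
    · simp only [if_pos h2]
      rw [if_pos, smul_eq_mul, ← Complex.ofReal_natCast, ← Complex.ofReal_mul,
        mul_inv_cancel₀ (ne_of_gt hk0)]
      · norm_num
      · simp only [Complex.ofReal_re]
        positivity
    · simp only [if_neg h2, smul_zero]
      norm_num
end
end

section
/- Suppose k ≥ 3 and let G be a k-regular digraph (with connected underlying graph) equipped with an η-function θ. For arcs a, b ∈ A(G)^{±1}, the set 𝒜(a,b) = {z ∈ A(G)^{±1} : e^{−iθ(z)} U_{az} U_{zb} ≠ 0}, where U = U(G^±), has at most one element; and |𝒜(a,b)| = 1 if and only if exactly one of the following holds: (i) a = b; (ii) o(a) = o(b) and a ≠ b; (iii) t(a) = t(b) and a ≠ b; (iv) t(b) is adjacent to o(a) in G^± and (a,b) satisfies none of (i), (ii), (iii). -/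
open Matrix Polynomial

noncomputable section

variable {V : Type} [Fintype V] [DecidableEq V]

set_option linter.unusedSectionVars false

lemma grover_entry (G : SimpleGraph V) [DecidableRel G.Adj] (a z : GArc G) :
    groverU G a z = coinC G (arcInv a) z := by
  rw [groverU, Matrix.mul_apply, Finset.sum_eq_single (arcInv a)]
  · simp [shiftS, arcInv_invol]
  · intro x _ hx
    have : a ≠ arcInv x := fun h => hx (by rw [h, arcInv_invol])
    simp [shiftS, this]
  · simp

lemma coin_entry (G : SimpleGraph V) [DecidableRel G.Adj] (x z : GArc G) :
    coinC G x z = 2 * (if arcT x = arcT z then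
        (((1 / Real.sqrt (G.degree (arcT z))) ^ 2 : ℝ) : ℂ) else 0)
      - (if x = z then 1 else 0) := by
  simp only [coinC, Matrix.sub_apply, Matrix.smul_apply, Matrix.mul_apply,
    Matrix.conjTranspose_apply, Matrix.one_apply, bdK, smul_eq_mul]
  congr 1
  simp only [apply_ite (star : ℂ → ℂ), star_zero, RCLike.star_def, Complex.conj_ofReal,
    ite_mul, zero_mul, mul_ite, mul_zero]
  rw [Finset.sum_ite_eq' Finset.univ (arcT z)]
  simp only [Finset.mem_univ, if_true]
  by_cases h : arcT x = arcT z
  · rw [if_pos h.symm, if_pos h, h]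
    push_cast
    ring
  · rw [if_neg (Ne.symm h), if_neg h, mul_zero]

lemma U_ne_iff {k : ℕ} (hk : 3 ≤ k) (D : Dgraph V) (hreg : ∀ v, D.underlying.degree v = k)
    (a z : GArc D.underlying) :
    groverU D.underlying a z ≠ 0 ↔ arcT z = arcO a := by
  rw [grover_entry, coin_entry]
  have harc : arcT (arcInv a) = arcO a := rfl
  rw [harc, hreg]
  have hkR : ((k : ℝ)) ≠ 0 := Nat.cast_ne_zero.mpr (by omega)
  have hsq : ((1 / Real.sqrt k) ^ 2 : ℝ) = 1 / k := by
    rw [div_pow, one_pow, Real.sq_sqrt (by positivity)]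
  rw [hsq]
  by_cases h : arcO a = arcT z
  · rw [if_pos h]
    by_cases hz : arcInv a = z
    · rw [if_pos hz]
      refine iff_of_true ?_ h.symm
      intro h0
      have hkC : ((k : ℂ)) ≠ 0 := Nat.cast_ne_zero.mpr (by omega)
      push_cast at h0
      have h2 : (2 : ℂ) = k := by field_simp at h0; linear_combination h0
      have : (k : ℕ) = 2 := by exact_mod_cast h2.symm
      omega
    · rw [if_neg hz, sub_zero]
      refine iff_of_true ?_ h.symm
      exact mul_ne_zero two_ne_zero
        (Complex.ofReal_ne_zero.mpr (one_div_ne_zero hkR))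
  · rw [if_neg h]
    have hz : arcInv a ≠ z := fun e => h (by rw [← e]; rfl)
    rw [if_neg hz]
    simp [Ne.symm h]
/-- For a `k`-regular digraph (`k ≥ 3`), the set
`𝒜(a,b) = {z : e^{−iθ(z)} U_{az} U_{zb} ≠ 0}` has at most one element, with exactly one
element iff (i) `a = b`, (ii) `o(a) = o(b)` and `a ≠ b`, (iii) `t(a) = t(b)` and `a ≠ b`,
or (iv) `t(b) ∼ o(a)` in `G^±` and none of (i), (ii), (iii) holds. -/
theorem stmt11 {V : Type} [Fintype V] [DecidableEq V] (k : ℕ) (hk : 3 ≤ k) (η : ℝ)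
    (D : Dgraph V) (hconn : D.underlying.Connected)
    (hreg : ∀ v, D.underlying.degree v = k)
    (a b : GArc D.underlying) :
    let U := groverU D.underlying
    let Aab : Set (GArc D.underlying) :=
      {z | Complex.exp (-(etaFun D η z : ℂ) * Complex.I) * U a z * U z b ≠ 0}
    Aab.ncard ≤ 1 ∧
    (Aab.ncard = 1 ↔
      a = b ∨ (arcO a = arcO b ∧ a ≠ b) ∨ (arcT a = arcT b ∧ a ≠ b) ∨
        (D.underlying.Adj (arcT b) (arcO a) ∧ ¬(a = b) ∧
          ¬(arcO a = arcO b ∧ a ≠ b) ∧ ¬(arcT a = arcT b ∧ a ≠ b))) := by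
  intro U Aab
  have hmem : ∀ z, z ∈ Aab ↔ arcT z = arcO a ∧ arcT b = arcO z := by
    intro z
    have : z ∈ Aab ↔ Complex.exp (-(etaFun D η z : ℂ) * Complex.I) * U a z * U z b ≠ 0 :=
      Iff.rfl
    rw [this, mul_ne_zero_iff, mul_ne_zero_iff]
    constructor
    · rintro ⟨⟨-, h1⟩, h2⟩
      exact ⟨(U_ne_iff hk D hreg a z).mp h1, (U_ne_iff hk D hreg z b).mp h2⟩
    · rintro ⟨h1, h2⟩
      exact ⟨⟨Complex.exp_ne_zero _, (U_ne_iff hk D hreg a z).mpr h1⟩,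
        (U_ne_iff hk D hreg z b).mpr h2⟩
  by_cases hadj : D.underlying.Adj (arcT b) (arcO a)
  · have hset : Aab = {(⟨(arcT b, arcO a), hadj⟩ : GArc D.underlying)} := by
      ext z
      rw [hmem z, Set.mem_singleton_iff]
      constructor
      · rintro ⟨h1, h2⟩
        exact Subtype.ext (Prod.ext h2.symm h1)
      · rintro rfl
        exact ⟨rfl, rfl⟩
    rw [hset, Set.ncard_singleton]
    refine ⟨le_refl 1, iff_of_true rfl ?_⟩
    tauto
  · have hset : Aab = ∅ := by
      refine Set.eq_empty_iff_forall_notMem.mpr fun z hz => ?_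
      rw [hmem z] at hz
      refine hadj ?_
      rw [hz.2, ← hz.1]
      exact z.2
    rw [hset]
    simp only [Set.ncard_empty]
    refine ⟨by norm_num, ?_⟩
    constructor
    · intro h; exact absurd h (by norm_num)
    · rintro (rfl | ⟨h, _⟩ | ⟨h, _⟩ | ⟨h, _⟩)
      · exact (hadj a.2.symm).elim
      · exact (hadj (by rw [h]; exact b.2.symm)).elim
      · exact (hadj (by rw [← h]; exact a.2.symm)).elim
      · exact (hadj h).elim
end
end
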